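/- arXiv:0912.3488 — 6 statements merged into one kernel-verified Lean document; each statement's English description precedes it below -/
import Mathlib

section
/- Let μ, ν : 𝔻 → ℝ be Borel measurable, let z₀, w₀ ∈ 𝔻, R > 0, and let m₁, m₂ be disk Möbius transformations. Then d^R_{μ∘m₁, ν∘m₂}(m₁⁻¹(z₀), m₂⁻¹(w₀)) = d^R_{μ,ν}(z₀, w₀), where m₁⁻¹, m₂⁻¹ denote the inverses of m₁, m₂ on 𝔻 (invariance of the local distance under Möbius changes of coordinates). -/
open Complex MeasureTheory ENNReal

noncomputable section

/-- The open unit disk in `ℂ`. -/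
def unitDisk : Set ℂ := {z : ℂ | ‖z‖ < 1}

/-- A disk Möbius transformation: `z ↦ τ (z - a)/(1 - conj a · z)` with `a ∈ 𝔻`, `|τ| = 1`. -/
def IsDiskMobius (m : ℂ → ℂ) : Prop :=
  ∃ a τ : ℂ, ‖a‖ < 1 ∧ ‖τ‖ = 1 ∧
    ∀ z : ℂ, m z = τ * (z - a) / (1 - (starRingEnd ℂ) a * z)

/-- The hyperbolic disk `Ω_{z₀,R}` of radius `R` centered at `z₀`. -/
def hypDisk (z₀ : ℂ) (R : ℝ) : Set ℂ :=
  {z : ℂ | ‖z‖ < 1 ∧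
    ‖(z - z₀) / (1 - (starRingEnd ℂ) z₀ * z)‖ < Real.tanh R}

/-- The hyperbolic area measure `dvol_H = (1 - |z|²)⁻² dλ` on `ℂ`. -/
def volH : Measure ℂ :=
  volume.withDensity (fun z => ENNReal.ofReal (((1 - ‖z‖ ^ 2) ^ 2)⁻¹))

/-- The local dissimilarity distance `d^R_{μ,ν}(z₀,w₀)`, valued in `[0,∞]`. -/
def dR (R : ℝ) (μ ν : ℂ → ℝ) (z₀ w₀ : ℂ) : ℝ≥0∞ :=
  ⨅ m : {m : ℂ → ℂ // IsDiskMobius m ∧ m z₀ = w₀},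
    ∫⁻ z in hypDisk z₀ R, ENNReal.ofReal |μ z - ν (m.1 z)| ∂volH

/-- The measure on `𝔻` with density `μ` w.r.t. the hyperbolic measure. -/
def muH (μ : ℂ → ℝ) : Measure ℂ :=
  (volH.restrict unitDisk).withDensity (fun z => ENNReal.ofReal (μ z))

/-- The generalized Kantorovich transportation cost `T^R_d(μ,ν)`. -/
def TRd (R : ℝ) (μ ν : ℂ → ℝ) : ℝ≥0∞ :=
  ⨅ π : {π : Measure (ℂ × ℂ) //
      π.map Prod.fst = muH μ ∧ π.map Prod.snd = muH ν},
    ∫⁻ p, dR R μ ν p.1 p.2 ∂π.1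

def aOf (z₀ w₀ σ : ℂ) : ℂ :=
  (z₀ - w₀ * (starRingEnd ℂ) σ) / (1 - (starRingEnd ℂ) z₀ * w₀ * (starRingEnd ℂ) σ)

def tauOf (z₀ w₀ σ : ℂ) : ℂ :=
  σ * (1 - (starRingEnd ℂ) z₀ * w₀ * (starRingEnd ℂ) σ) / (1 - z₀ * (starRingEnd ℂ) w₀ * σ)

/-- The Möbius transformation `m_{z₀,w₀,σ}`. -/
def stdMobius (z₀ w₀ σ : ℂ) (z : ℂ) : ℂ :=
  tauOf z₀ w₀ σ * (z - aOf z₀ w₀ σ) / (1 - (starRingEnd ℂ) (aOf z₀ w₀ σ) * z)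

/-- `Φ(z₀,w₀,σ)`. -/
def Phi (R : ℝ) (μ ν : ℂ → ℝ) (z₀ w₀ σ : ℂ) : ℝ≥0∞ :=
  ∫⁻ z in hypDisk z₀ R, ENNReal.ofReal |μ z - ν (stdMobius z₀ w₀ σ z)| ∂volH


/-! ### Auxiliary lemmas for Möbius invariance -/

/-- The standard disk Möbius map with parameters `a`, `τ`. -/
def M (a τ : ℂ) (z : ℂ) : ℂ := τ * (z - a) / (1 - (starRingEnd ℂ) a * z)

lemma mem_unitDisk {z : ℂ} : z ∈ unitDisk ↔ ‖z‖ < 1 := Iff.rfl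

lemma nsq_id (a z : ℂ) : normSq (1 - (starRingEnd ℂ) a * z) - normSq (z - a)
    = (1 - normSq a) * (1 - normSq z) := by
  simp [normSq_apply, sub_re, sub_im, mul_re, mul_im, conj_re, conj_im]; ring

lemma absmul_lt {a z : ℂ} (ha : ‖a‖ < 1) (hz : ‖z‖ ≤ 1) :
    ‖a‖ * ‖z‖ < 1 := by
  nlinarith [norm_nonneg a, norm_nonneg z]

lemma den_ne {a z : ℂ} (h : ‖a‖ * ‖z‖ < 1) :
    1 - (starRingEnd ℂ) a * z ≠ 0 := by
  intro hc
  have h1 : (starRingEnd ℂ) a * z = 1 := by linear_combination -hc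
  have h2 : ‖(starRingEnd ℂ) a * z‖ = 1 := by rw [h1]; simp
  rw [norm_mul, Complex.norm_conj] at h2
  exact absurd h2 (ne_of_lt h)

lemma nsq_lt_one {z : ℂ} (hz : ‖z‖ < 1) : normSq z < 1 := by
  rw [← Complex.sq_norm]; nlinarith [norm_nonneg z]

lemma conj_mul_self_eq_one {τ : ℂ} (hτ : ‖τ‖ = 1) : (starRingEnd ℂ) τ * τ = 1 := by
  rw [← Complex.normSq_eq_conj_mul_self]
  norm_cast
  rw [← Complex.sq_norm, hτ]; norm_num

lemma one_sub_nsq_ne {a : ℂ} (ha : ‖a‖ < 1) : (1 : ℂ) - normSq a ≠ 0 := by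
  have h1 : normSq a < 1 := nsq_lt_one ha
  intro hc
  have h2 : (normSq a : ℂ) = 1 := by linear_combination -hc
  have h3 : normSq a = 1 := by exact_mod_cast h2
  linarith

lemma nsq_lt {a z : ℂ} (ha : ‖a‖ < 1) (hz : ‖z‖ < 1) :
    ‖z - a‖ < ‖1 - (starRingEnd ℂ) a * z‖ := by
  have h1 : normSq (z - a) < normSq (1 - (starRingEnd ℂ) a * z) := by
    have := nsq_id a z
    have ha' := nsq_lt_one ha
    have hz' := nsq_lt_one hz
    nlinarith
  rw [← Complex.sq_norm, ← Complex.sq_norm] at h1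
  exact lt_of_pow_lt_pow_left₀ 2 (norm_nonneg _) h1

lemma maps_to {a τ : ℂ} (ha : ‖a‖ < 1) (hτ : ‖τ‖ = 1)
    {z : ℂ} (hz : ‖z‖ < 1) : ‖M a τ z‖ < 1 := by
  have hd := den_ne (absmul_lt ha hz.le)
  have hdpos : 0 < ‖1 - (starRingEnd ℂ) a * z‖ := norm_pos_iff.mpr hd
  rw [M, norm_div, norm_mul, hτ, one_mul, div_lt_one hdpos]
  exact nsq_lt ha hz

lemma tau_ne_zero {τ : ℂ} (hτ : ‖τ‖ = 1) : τ ≠ 0 := by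
  intro h; rw [h] at hτ; simp at hτ

lemma conj_eq_inv {τ : ℂ} (hτ : ‖τ‖ = 1) : (starRingEnd ℂ) τ = τ⁻¹ := by
  have h1 := conj_mul_self_eq_one hτ
  field_simp [tau_ne_zero hτ]
  linear_combination h1

lemma left_inv_M {a τ z : ℂ} (ha : ‖a‖ < 1) (hτ : ‖τ‖ = 1)
    (hd : 1 - (starRingEnd ℂ) a * z ≠ 0) :
    M (-τ * a) (starRingEnd ℂ τ) (M a τ z) = z := by
  have hτ1 := conj_mul_self_eq_one hτ
  have hsa := one_sub_nsq_ne ha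
  have key : 1 - (starRingEnd ℂ) (-τ * a) * (M a τ z)
      = (1 - normSq a) / (1 - (starRingEnd ℂ) a * z) := by
    rw [M, map_mul, map_neg]
    have hd2 : 1 - z * (starRingEnd ℂ) a ≠ 0 := by rwa [mul_comm z]
    field_simp
    rw [Complex.normSq_eq_conj_mul_self]
    linear_combination ((starRingEnd ℂ) a * z - (starRingEnd ℂ) a * a) * hτ1
  rw [M, key, div_eq_iff (div_ne_zero hsa hd), M]
  have hd2 : 1 - z * (starRingEnd ℂ) a ≠ 0 := by rwa [mul_comm z]
  field_simp
  rw [Complex.normSq_eq_conj_mul_self]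
  linear_combination (z - (starRingEnd ℂ) a * a * z) * hτ1

lemma right_inv_M {a τ w : ℂ} (ha : ‖a‖ < 1) (hτ : ‖τ‖ = 1)
    (hw : ‖w‖ < 1) : M a τ (M (-τ * a) ((starRingEnd ℂ) τ) w) = w := by
  have hτ1 := conj_mul_self_eq_one hτ
  have ha' : ‖-τ * a‖ < 1 := by
    rw [norm_mul, norm_neg, hτ, one_mul]; exact ha
  have hτ' : ‖(starRingEnd ℂ) τ‖ = 1 := by rw [Complex.norm_conj]; exact hτ
  have hd' : 1 - (starRingEnd ℂ) (-τ * a) * w ≠ 0 := den_ne (absmul_lt ha' hw.le)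
  have h := left_inv_M ha' hτ' hd'
  have e1 : -(starRingEnd ℂ) τ * (-τ * a) = a := by linear_combination a * hτ1
  have e2 : (starRingEnd ℂ) ((starRingEnd ℂ) τ) = τ := Complex.conj_conj τ
  rw [e1, e2] at h
  exact h

lemma injOn_M {a τ : ℂ} (ha : ‖a‖ < 1) (hτ : ‖τ‖ = 1) :
    Set.InjOn (M a τ) unitDisk := by
  intro z hz z' hz' h
  have hdz := den_ne (absmul_lt ha (le_of_lt hz))
  have hdz' := den_ne (absmul_lt ha (le_of_lt hz'))
  rw [← left_inv_M ha hτ hdz, ← left_inv_M ha hτ hdz', h]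

lemma hasDerivAt_M {a τ z : ℂ} (hd : 1 - (starRingEnd ℂ) a * z ≠ 0) :
    HasDerivAt (M a τ) (τ * (1 - normSq a) / (1 - (starRingEnd ℂ) a * z) ^ 2) z := by
  have h1 : HasDerivAt (fun z : ℂ => τ * (z - a)) τ z := by
    simpa using ((hasDerivAt_id z).sub_const a).const_mul τ
  have h2 : HasDerivAt (fun z : ℂ => 1 - (starRingEnd ℂ) a * z) (-(starRingEnd ℂ) a) z := by
    simpa using ((hasDerivAt_id z).const_mul ((starRingEnd ℂ) a)).const_sub 1
  have h3 := h1.div h2 hd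
  refine h3.congr_deriv ?_
  rw [Complex.normSq_eq_conj_mul_self]
  field_simp
  ring

lemma det_restrict (d : ℂ) :
    ((ContinuousLinearMap.smulRight (1 : ℂ →L[ℂ] ℂ) d).restrictScalars ℝ).det = normSq d := by
  have h : (((ContinuousLinearMap.smulRight (1 : ℂ →L[ℂ] ℂ) d).restrictScalars ℝ) :
      ℂ →ₗ[ℝ] ℂ) = Algebra.lmul ℝ ℂ d := by
    ext z
    · simp [mul_comm]
  rw [ContinuousLinearMap.det, h]
  exact Algebra.norm_complex_apply d

lemma one_sub_nsq_M {a τ z : ℂ} (ha : ‖a‖ < 1) (hτ : ‖τ‖ = 1)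
    (hz : ‖z‖ < 1) :
    1 - normSq (M a τ z)
      = (1 - normSq a) * (1 - normSq z) / normSq (1 - (starRingEnd ℂ) a * z) := by
  have hd := den_ne (absmul_lt ha hz.le)
  have hd' : normSq (1 - (starRingEnd ℂ) a * z) ≠ 0 := by
    simpa [Complex.normSq_eq_zero] using hd
  have hτ' : normSq τ = 1 := by rw [← Complex.sq_norm, hτ]; norm_num
  rw [M, normSq_div, normSq_mul, hτ', one_mul]
  have hd2 : normSq (1 - z * (starRingEnd ℂ) a) ≠ 0 := by rwa [mul_comm z]
  field_simp
  have e : normSq (1 - z * (starRingEnd ℂ) a) = normSq (1 - (starRingEnd ℂ) a * z) := by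
    rw [mul_comm z]
  linear_combination nsq_id a z + e

lemma meas_rho : Measurable (fun z : ℂ => ENNReal.ofReal (((1 - ‖z‖ ^ 2) ^ 2)⁻¹)) := by
  exact ENNReal.measurable_ofReal.comp
    ((((continuous_norm.measurable.pow_const 2).const_sub 1).pow_const 2).inv)

lemma volH_image {a τ : ℂ} (ha : ‖a‖ < 1) (hτ : ‖τ‖ = 1)
    {S : Set ℂ} (hS : MeasurableSet S) (hSD : S ⊆ unitDisk) (g : ℂ → ℝ≥0∞) :
    ∫⁻ w in (M a τ) '' S, g w ∂volH = ∫⁻ z in S, g (M a τ z) ∂volH := by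
  set f' : ℂ → ℂ →L[ℝ] ℂ := fun z =>
    ((ContinuousLinearMap.smulRight (1 : ℂ →L[ℂ] ℂ)
      (τ * (1 - normSq a) / (1 - (starRingEnd ℂ) a * z) ^ 2)).restrictScalars ℝ) with hf'def
  have hf' : ∀ z ∈ S, HasFDerivWithinAt (M a τ) (f' z) S z := by
    intro z hz
    have hd := den_ne (absmul_lt ha (le_of_lt (hSD hz)))
    exact ((hasDerivAt_M hd).hasFDerivAt.restrictScalars ℝ).hasFDerivWithinAt
  have hinj : Set.InjOn (M a τ) S := (injOn_M ha hτ).mono hSD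
  have himg : MeasurableSet ((M a τ) '' S) :=
    measurable_image_of_fderivWithin hS hf' hinj
  have hfin : ∀ᵐ x ∂(volume.restrict ((M a τ) '' S)),
      (fun z : ℂ => ENNReal.ofReal (((1 - ‖z‖ ^ 2) ^ 2)⁻¹)) x < ⊤ :=
    Filter.Eventually.of_forall (fun x => ENNReal.ofReal_lt_top)
  have hfin2 : ∀ᵐ x ∂(volume.restrict S),
      (fun z : ℂ => ENNReal.ofReal (((1 - ‖z‖ ^ 2) ^ 2)⁻¹)) x < ⊤ :=
    Filter.Eventually.of_forall (fun x => ENNReal.ofReal_lt_top)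
  rw [volH, setLIntegral_withDensity_eq_setLIntegral_mul_non_measurable _ meas_rho _ himg hfin,
    setLIntegral_withDensity_eq_setLIntegral_mul_non_measurable _ meas_rho _ hS hfin2,
    lintegral_image_eq_lintegral_abs_det_fderiv_mul volume hS hf' hinj]
  apply setLIntegral_congr_fun hS
  intro z hz
  have hz1 : ‖z‖ < 1 := hSD hz
  have hd := den_ne (absmul_lt ha hz1.le)
  have hd' : normSq (1 - (starRingEnd ℂ) a * z) ≠ 0 := by
    simpa [Complex.normSq_eq_zero] using hd
  have hMz := one_sub_nsq_M ha hτ hz1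
  simp only [Pi.mul_apply, det_restrict, f']
  rw [_root_.abs_of_nonneg (normSq_nonneg _), ← mul_assoc,
    ← ENNReal.ofReal_mul (normSq_nonneg _)]
  congr 2
  have hτ' : normSq τ = 1 := by rw [← Complex.sq_norm, hτ]; norm_num
  have hza : normSq z < 1 := nsq_lt_one hz1
  have hna : normSq a < 1 := nsq_lt_one ha
  rw [Complex.sq_norm, Complex.sq_norm, hMz, normSq_div, normSq_mul, hτ', one_mul, map_pow]
  have h1 : (1:ℝ) - normSq z ≠ 0 := by linarith
  have h2 : (1:ℝ) - normSq a ≠ 0 := by linarith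
  have h3 : normSq ((1 : ℂ) - (normSq a : ℂ)) = (1 - normSq a)^2 := by
    rw [← Complex.ofReal_one, ← Complex.ofReal_sub, Complex.normSq_ofReal]; ring
  rw [h3]
  field_simp

lemma abs_one_sub_nsq {a : ℂ} (ha : ‖a‖ < 1) :
    ‖(1 : ℂ) - (normSq a : ℂ)‖ = 1 - normSq a := by
  rw [← Complex.ofReal_one, ← Complex.ofReal_sub, Complex.norm_of_nonneg (by nlinarith [nsq_lt_one ha])]

lemma key_I1 {a τ z c : ℂ}
    (hdz : 1 - (starRingEnd ℂ) a * z ≠ 0) (hdc : 1 - (starRingEnd ℂ) a * c ≠ 0) :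
    M a τ z - M a τ c
      = τ * (1 - normSq a) * (z - c)
        / ((1 - (starRingEnd ℂ) a * z) * (1 - (starRingEnd ℂ) a * c)) := by
  rw [M, M, div_sub_div _ _ hdz hdc, Complex.normSq_eq_conj_mul_self]
  congr 1
  ring

lemma key_I2 {a τ z c : ℂ} (hτ : ‖τ‖ = 1)
    (hdz : 1 - (starRingEnd ℂ) a * z ≠ 0) (hdc : 1 - a * (starRingEnd ℂ) c ≠ 0) :
    1 - (starRingEnd ℂ) (M a τ c) * M a τ z
      = (1 - normSq a) * (1 - (starRingEnd ℂ) c * z)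
        / ((1 - a * (starRingEnd ℂ) c) * (1 - (starRingEnd ℂ) a * z)) := by
  have hτ1 := conj_mul_self_eq_one hτ
  rw [M, M, map_div₀, map_mul, map_sub, map_sub, map_one, map_mul, Complex.conj_conj,
    Complex.normSq_eq_conj_mul_self]
  have hd2 : 1 - (starRingEnd ℂ) c * a ≠ 0 := by rwa [mul_comm _ a]
  field_simp
  linear_combination (-((starRingEnd ℂ) c - (starRingEnd ℂ) a) * (z - a)) * hτ1

lemma pseudo_inv {a τ z c : ℂ} (ha : ‖a‖ < 1) (hτ : ‖τ‖ = 1)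
    (hz : ‖z‖ < 1) (hc : ‖c‖ < 1) :
    ‖(M a τ z - M a τ c) / (1 - (starRingEnd ℂ) (M a τ c) * M a τ z)‖
      = ‖(z - c) / (1 - (starRingEnd ℂ) c * z)‖ := by
  have hdz := den_ne (absmul_lt ha hz.le)
  have hdc := den_ne (absmul_lt ha hc.le)
  have hdc' : 1 - a * (starRingEnd ℂ) c ≠ 0 := by
    intro hzero
    apply den_ne (absmul_lt ha hc.le)
    have h0 : (starRingEnd ℂ) (1 - a * (starRingEnd ℂ) c) = 0 := by rw [hzero]; simp
    simpa [map_sub, map_mul, Complex.conj_conj] using h0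
  rw [key_I1 hdz hdc, key_I2 hτ hdz hdc', div_div_div_eq]
  rw [norm_div, norm_mul, norm_mul, norm_mul, norm_mul, norm_div, norm_mul]
  rw [hτ, abs_one_sub_nsq ha]
  have habs : ‖1 - a * (starRingEnd ℂ) c‖
      = ‖1 - (starRingEnd ℂ) a * c‖ := by
    rw [← Complex.norm_conj (1 - a * (starRingEnd ℂ) c)]
    congr 1
    simp [map_sub, map_mul, Complex.conj_conj]
  have h1 : 1 - normSq a ≠ 0 := by nlinarith [nsq_lt_one ha]
  have hA : ‖1 - (starRingEnd ℂ) a * z‖ ≠ 0 := norm_ne_zero_iff.mpr hdz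
  have hB : ‖1 - (starRingEnd ℂ) a * c‖ ≠ 0 := norm_ne_zero_iff.mpr hdc
  have hC : ‖1 - (starRingEnd ℂ) c * z‖ ≠ 0 :=
    norm_ne_zero_iff.mpr (den_ne (absmul_lt hc hz.le))
  rw [norm_mul, norm_mul, abs_one_sub_nsq ha, habs]
  have hA' : ‖1 - z * (starRingEnd ℂ) a‖ ≠ 0 := by rwa [mul_comm z]
  have hB' : ‖1 - c * (starRingEnd ℂ) a‖ ≠ 0 := by rwa [mul_comm c]
  have hC' : ‖1 - z * (starRingEnd ℂ) c‖ ≠ 0 := by rwa [mul_comm z]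
  field_simp

lemma image_hypDisk {a τ c : ℂ} (ha : ‖a‖ < 1) (hτ : ‖τ‖ = 1)
    (hc : ‖c‖ < 1) (R : ℝ) :
    (M a τ) '' hypDisk c R = hypDisk (M a τ c) R := by
  ext w
  constructor
  · rintro ⟨z, ⟨hz1, hz2⟩, rfl⟩
    exact ⟨maps_to ha hτ hz1, by rw [pseudo_inv ha hτ hz1 hc]; exact hz2⟩
  · rintro ⟨hw1, hw2⟩
    have ha' : ‖-τ * a‖ < 1 := by
      rw [norm_mul, norm_neg, hτ, one_mul]; exact ha
    have hτ' : ‖(starRingEnd ℂ) τ‖ = 1 := by rw [Complex.norm_conj]; exact hτ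
    set u := M (-τ * a) ((starRingEnd ℂ) τ) w with hu
    have hu1 : ‖u‖ < 1 := maps_to ha' hτ' hw1
    have huw : M a τ u = w := right_inv_M ha hτ hw1
    refine ⟨u, ⟨hu1, ?_⟩, huw⟩
    have h := pseudo_inv ha hτ hu1 hc
    rw [huw] at h
    rw [← h]
    exact hw2

set_option maxHeartbeats 1000000 in
lemma comp_mobius {g h : ℂ → ℂ} (hg : IsDiskMobius g) (hh : IsDiskMobius h) :
    ∃ f : ℂ → ℂ, IsDiskMobius f ∧ ∀ z ∈ unitDisk, f z = g (h z) := by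
  obtain ⟨a₂, τ₂, ha₂, hτ₂, hgf⟩ := hg
  obtain ⟨a₁, τ₁, ha₁, hτ₁, hhf⟩ := hh
  have hτ₁1 := conj_mul_self_eq_one hτ₁
  have hτ₁0 : τ₁ ≠ 0 := tau_ne_zero hτ₁
  have hc1 : (starRingEnd ℂ) τ₁ = τ₁⁻¹ := conj_eq_inv hτ₁
  have hkey : normSq (τ₁ + a₂ * (starRingEnd ℂ) a₁) - normSq (τ₁ * a₁ + a₂)
      = (1 - normSq a₁) * (1 - normSq a₂) := by
    have hc : ((normSq (τ₁ + a₂ * (starRingEnd ℂ) a₁) : ℂ)) - (normSq (τ₁ * a₁ + a₂) : ℂ)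
        = (((1 - normSq a₁) * (1 - normSq a₂) : ℝ) : ℂ) := by
      push_cast
      rw [← Complex.mul_conj, ← Complex.mul_conj, ← Complex.mul_conj, ← Complex.mul_conj]
      simp only [map_add, map_mul, Complex.conj_conj]
      linear_combination (1 - (starRingEnd ℂ) a₁ * a₁) * hτ₁1
    exact_mod_cast hc
  have hns1 : normSq a₁ < 1 := nsq_lt_one ha₁
  have hns2 : normSq a₂ < 1 := nsq_lt_one ha₂
  have hden1pos : 0 < normSq (τ₁ + a₂ * (starRingEnd ℂ) a₁) := by
    nlinarith [normSq_nonneg (τ₁ * a₁ + a₂)]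
  have hden1 : τ₁ + a₂ * (starRingEnd ℂ) a₁ ≠ 0 := by
    intro hc; rw [hc] at hden1pos; simp at hden1pos
  have hconjden2 : (starRingEnd ℂ) (1 + (starRingEnd ℂ) a₂ * τ₁ * a₁)
      = (starRingEnd ℂ) τ₁ * (τ₁ + a₂ * (starRingEnd ℂ) a₁) := by
    simp only [map_add, map_mul, map_one, Complex.conj_conj]
    linear_combination -hτ₁1
  have habsden : ‖1 + (starRingEnd ℂ) a₂ * τ₁ * a₁‖
      = ‖τ₁ + a₂ * (starRingEnd ℂ) a₁‖ := by
    rw [← Complex.norm_conj (1 + (starRingEnd ℂ) a₂ * τ₁ * a₁), hconjden2, norm_mul,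
      Complex.norm_conj, hτ₁, one_mul]
  have hden2 : 1 + (starRingEnd ℂ) a₂ * τ₁ * a₁ ≠ 0 := by
    intro hc
    rw [hc] at habsden
    simp only [norm_zero] at habsden
    exact hden1 (norm_eq_zero.mp habsden.symm)
  have haabs : ‖(τ₁ * a₁ + a₂) / (τ₁ + a₂ * (starRingEnd ℂ) a₁)‖ < 1 := by
    rw [norm_div, div_lt_one (norm_pos_iff.mpr hden1)]
    have h2 : ‖τ₁ * a₁ + a₂‖ ^ 2
        < ‖τ₁ + a₂ * (starRingEnd ℂ) a₁‖ ^ 2 := by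
      rw [Complex.sq_norm, Complex.sq_norm]; nlinarith
    exact lt_of_pow_lt_pow_left₀ 2 (norm_nonneg _) h2
  have hτabs : ‖τ₂ * (τ₁ + a₂ * (starRingEnd ℂ) a₁)
      / (1 + (starRingEnd ℂ) a₂ * τ₁ * a₁)‖ = 1 := by
    rw [norm_div, norm_mul, hτ₂, one_mul, habsden, div_self (norm_ne_zero_iff.mpr hden1)]
  refine ⟨M ((τ₁ * a₁ + a₂) / (τ₁ + a₂ * (starRingEnd ℂ) a₁))
      (τ₂ * (τ₁ + a₂ * (starRingEnd ℂ) a₁) / (1 + (starRingEnd ℂ) a₂ * τ₁ * a₁)),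
    ⟨_, _, haabs, hτabs, fun z => rfl⟩, ?_⟩
  intro z hz
  have hz1 : ‖z‖ < 1 := hz
  have hd1 : 1 - (starRingEnd ℂ) a₁ * z ≠ 0 := den_ne (absmul_lt ha₁ hz1.le)
  have hhz : ‖M a₁ τ₁ z‖ < 1 := maps_to ha₁ hτ₁ hz1
  have hd2 : 1 - (starRingEnd ℂ) a₂ * (M a₁ τ₁ z) ≠ 0 := den_ne (absmul_lt ha₂ hhz.le)
  have hd3 : 1 - (starRingEnd ℂ) ((τ₁ * a₁ + a₂) / (τ₁ + a₂ * (starRingEnd ℂ) a₁)) * z ≠ 0 :=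
    den_ne (absmul_lt haabs hz1.le)
  rw [hgf, hhf]
  rw [M] at hd2 hhz
  rw [M, div_eq_div_iff hd3 hd2]
  have h4 : τ₁⁻¹ + (starRingEnd ℂ) a₂ * a₁ ≠ 0 := by
    intro hc
    apply hden2
    have h5 : τ₁ * (τ₁⁻¹ + (starRingEnd ℂ) a₂ * a₁) = 0 := by rw [hc, mul_zero]
    rw [mul_add, mul_inv_cancel₀ hτ₁0] at h5
    linear_combination h5
  have hden2eq : 1 + (starRingEnd ℂ) a₂ * τ₁ * a₁ = τ₁ * (τ₁⁻¹ + (starRingEnd ℂ) a₂ * a₁) := by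
    rw [mul_add, mul_inv_cancel₀ hτ₁0]; ring
  simp only [map_div₀, map_add, map_mul, Complex.conj_conj, hc1, hden2eq] at hd3 ⊢
  have hden2'' : 1 + (starRingEnd ℂ) a₂ * a₁ * τ₁ ≠ 0 := by
    intro hc; apply hden2; linear_combination hc
  have hden1' : τ₁ + (starRingEnd ℂ) a₁ * a₂ ≠ 0 := by rwa [mul_comm _ a₂]
  have hden3 : 1 + τ₁ * (starRingEnd ℂ) a₂ * a₁ ≠ 0 := by
    intro hc; apply hden2; linear_combination hc
  field_simp at hd3 ⊢
  ring

lemma mobius_mapsTo {m : ℂ → ℂ} (hm : IsDiskMobius m) {z : ℂ} (hz : z ∈ unitDisk) :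
    m z ∈ unitDisk := by
  obtain ⟨a, τ, ha, hτ, hmf⟩ := hm
  have : m z = M a τ z := hmf z
  rw [mem_unitDisk, this]
  exact maps_to ha hτ hz

lemma exists_inverse {m : ℂ → ℂ} (hm : IsDiskMobius m) :
    ∃ minv : ℂ → ℂ, IsDiskMobius minv ∧ (∀ z ∈ unitDisk, minv (m z) = z) ∧
      (∀ z ∈ unitDisk, m (minv z) = z) ∧ (∀ z ∈ unitDisk, minv z ∈ unitDisk) := by
  obtain ⟨a, τ, ha, hτ, hmf⟩ := hm
  have hmM : m = M a τ := funext fun z => hmf z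
  have ha' : ‖-τ * a‖ < 1 := by
    rw [norm_mul, norm_neg, hτ, one_mul]; exact ha
  have hτ' : ‖(starRingEnd ℂ) τ‖ = 1 := by rw [Complex.norm_conj]; exact hτ
  refine ⟨M (-τ * a) ((starRingEnd ℂ) τ), ⟨_, _, ha', hτ', fun z => rfl⟩, ?_, ?_, ?_⟩
  · intro z hz
    rw [hmM]
    exact left_inv_M ha hτ (den_ne (absmul_lt ha (le_of_lt hz)))
  · intro z hz
    rw [hmM]
    exact right_inv_M ha hτ hz
  · intro z hz
    exact maps_to ha' hτ' hz

lemma measurableSet_hypDisk (z₀ : ℂ) (R : ℝ) : MeasurableSet (hypDisk z₀ R) := by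
  have h1 : Measurable (fun z : ℂ => ‖z‖) := continuous_norm.measurable
  have h2 : Measurable
      (fun z : ℂ => ‖(z - z₀) / (1 - (starRingEnd ℂ) z₀ * z)‖) := by
    apply continuous_norm.measurable.comp
    exact (measurable_id.sub_const z₀).div (measurable_const.sub (measurable_const_mul _))
  exact (measurableSet_lt h1 measurable_const).inter (measurableSet_lt h2 measurable_const)

lemma dR_congr (R : ℝ) {μ μ' ν ν' : ℂ → ℝ}
    (hμ : ∀ z ∈ unitDisk, μ z = μ' z) (hν : ∀ z ∈ unitDisk, ν z = ν' z) (z₀ w₀ : ℂ) :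
    dR R μ ν z₀ w₀ = dR R μ' ν' z₀ w₀ := by
  rw [dR, dR]
  refine iInf_congr fun m => ?_
  apply setLIntegral_congr_fun (measurableSet_hypDisk z₀ R)
  intro z hz
  have hzD : z ∈ unitDisk := hz.1
  dsimp only
  rw [hμ z hzD, hν (m.1 z) (mobius_mapsTo m.2.1 hzD)]

lemma dR_le (R : ℝ) (μ ν : ℂ → ℝ) {m₁ m₂ : ℂ → ℂ}
    (hm₁ : IsDiskMobius m₁) (hm₂ : IsDiskMobius m₂) {z₀ w₀ z₀' w₀' : ℂ}
    (hz₀' : z₀' ∈ unitDisk) (hw₀' : w₀' ∈ unitDisk)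
    (hz : m₁ z₀' = z₀) (hw : m₂ w₀' = w₀) :
    dR R (μ ∘ m₁) (ν ∘ m₂) z₀' w₀' ≤ dR R μ ν z₀ w₀ := by
  rw [dR, dR]
  refine le_iInf fun m => ?_
  obtain ⟨hmM, hmz⟩ := m.2
  obtain ⟨m₂inv, hm₂invM, h2l, h2r, h2maps⟩ := exists_inverse hm₂
  obtain ⟨f₁, hf₁M, hf₁⟩ := comp_mobius hmM hm₁
  obtain ⟨f₂, hf₂M, hf₂⟩ := comp_mobius hm₂invM hf₁M
  have hz₀ : z₀ ∈ unitDisk := hz ▸ mobius_mapsTo hm₁ hz₀'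
  have hf₂z₀' : f₂ z₀' = w₀' := by
    rw [hf₂ _ hz₀', hf₁ _ hz₀', hz, hmz, ← hw, h2l w₀' hw₀']
  refine iInf_le_of_le ⟨f₂, hf₂M, hf₂z₀'⟩ (le_of_eq ?_)
  obtain ⟨a₁, τ₁, ha₁, hτ₁, hm₁f⟩ := hm₁
  have hm₁M : m₁ = M a₁ τ₁ := funext fun z => hm₁f z
  have hsub : hypDisk z₀' R ⊆ unitDisk := fun z hzz => hzz.1
  have hmeas : MeasurableSet (hypDisk z₀' R) := measurableSet_hypDisk _ _
  have step1 : ∫⁻ z in hypDisk z₀' R, ENNReal.ofReal |(μ ∘ m₁) z - (ν ∘ m₂) (f₂ z)| ∂volH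
      = ∫⁻ z in hypDisk z₀' R,
          (fun w => ENNReal.ofReal |μ w - ν (m.1 w)|) (m₁ z) ∂volH := by
    apply setLIntegral_congr_fun hmeas
    intro z hzz
    have hzD : z ∈ unitDisk := hsub hzz
    have h1 : m₁ z ∈ unitDisk := mobius_mapsTo ⟨a₁, τ₁, ha₁, hτ₁, hm₁f⟩ hzD
    have h2 : m.1 (m₁ z) ∈ unitDisk := mobius_mapsTo hmM h1
    simp only [Function.comp_apply]
    rw [hf₂ _ hzD, hf₁ _ hzD, h2r _ h2]
  have himg := volH_image ha₁ hτ₁ hmeas hsub (fun w => ENNReal.ofReal |μ w - ν (m.1 w)|)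
  rw [step1, hm₁M, ← himg, image_hypDisk ha₁ hτ₁ hz₀']
  rw [show M a₁ τ₁ z₀' = z₀ from hm₁M ▸ hz]


theorem dR_mobius_invariance (μ ν : ℂ → ℝ) (hμ : Measurable μ) (hν : Measurable ν)
    (z₀ w₀ : ℂ) (hz₀ : z₀ ∈ unitDisk) (hw₀ : w₀ ∈ unitDisk) (R : ℝ) (hR : 0 < R)
    (m₁ m₂ m₁inv m₂inv : ℂ → ℂ) (hm₁ : IsDiskMobius m₁) (hm₂ : IsDiskMobius m₂)
    (h₁ : ∀ z ∈ unitDisk, m₁inv (m₁ z) = z) (h₁' : ∀ z ∈ unitDisk, m₁ (m₁inv z) = z)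
    (h₂ : ∀ z ∈ unitDisk, m₂inv (m₂ z) = z) (h₂' : ∀ z ∈ unitDisk, m₂ (m₂inv z) = z) :
    dR R (μ ∘ m₁) (ν ∘ m₂) (m₁inv z₀) (m₂inv w₀) = dR R μ ν z₀ w₀ := by
  obtain ⟨m₁inv', h₁M, h₁l, h₁r, h₁maps⟩ := exists_inverse hm₁
  obtain ⟨m₂inv', h₂M, h₂l, h₂r, h₂maps⟩ := exists_inverse hm₂
  have hz₀' : m₁inv z₀ = m₁inv' z₀ := by
    conv_lhs => rw [← h₁r z₀ hz₀]
    exact h₁ _ (h₁maps z₀ hz₀)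
  have hw₀' : m₂inv w₀ = m₂inv' w₀ := by
    conv_lhs => rw [← h₂r w₀ hw₀]
    exact h₂ _ (h₂maps w₀ hw₀)
  rw [hz₀', hw₀']
  apply le_antisymm
  · exact dR_le R μ ν hm₁ hm₂ (h₁maps z₀ hz₀) (h₂maps w₀ hw₀) (h₁r z₀ hz₀) (h₂r w₀ hw₀)
  · have e : dR R μ ν z₀ w₀ = dR R ((μ ∘ m₁) ∘ m₁inv') ((ν ∘ m₂) ∘ m₂inv') z₀ w₀ := by
      refine dR_congr R (fun z hz => ?_) (fun z hz => ?_) z₀ w₀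
      · simp only [Function.comp_apply]; rw [h₁r z hz]
      · simp only [Function.comp_apply]; rw [h₂r z hz]
    rw [e]
    exact dR_le R (μ ∘ m₁) (ν ∘ m₂) h₁M h₂M hz₀ hw₀ rfl rfl

end
end

section
/- Let μ, ν : 𝔻 → ℝ be continuous, let z₀, w₀ ∈ 𝔻 and R > 0. Then the function σ ↦ Φ(z₀, w₀, σ) is continuous on the unit circle {σ ∈ ℂ : |σ| = 1}, and consequently the infimum defining d^R_{μ,ν}(z₀, w₀) is attained: there exists a disk Möbius transformation m with m(z₀) = w₀ such that ∫_{Ω_{z₀,R}} |μ(z) − ν(m(z))| dvol_H(z) = d^R_{μ,ν}(z₀, w₀). -/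
open Complex MeasureTheory ENNReal

noncomputable section

lemma one_sub_mul_ne_zero {u v : ℂ} (hu : ‖u‖ < 1) (hv : ‖v‖ ≤ 1) :
    1 - u * v ≠ 0 := by
  intro h
  have : u * v = 1 := by linear_combination -h
  have := congrArg (‖·‖) this
  rw [norm_mul, norm_one] at this
  nlinarith [norm_nonneg u, norm_nonneg v]

lemma normSq_identity (p q : ℂ) :
    normSq (1 - (starRingEnd ℂ) p * q) - normSq (p - q)
      = (1 - normSq p) * (1 - normSq q) := by
  simp only [Complex.normSq_apply, Complex.sub_re, Complex.sub_im, Complex.mul_re,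
    Complex.mul_im, Complex.one_re, Complex.one_im, Complex.conj_re, Complex.conj_im]
  ring

lemma normSq_lt_one_iff {p : ℂ} : normSq p < 1 ↔ ‖p‖ < 1 := by
  rw [← Complex.sq_norm]
  constructor
  · intro h; nlinarith [norm_nonneg p]
  · intro h; nlinarith [norm_nonneg p]

lemma quot_abs_lt_one {p q : ℂ} (hp : ‖p‖ < 1) (hq : ‖q‖ < 1) :
    ‖(p - q) / (1 - (starRingEnd ℂ) p * q)‖ < 1 := by
  have hne : 1 - (starRingEnd ℂ) p * q ≠ 0 :=
    one_sub_mul_ne_zero (by simpa using hp) hq.le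
  have h0 : 0 < ‖1 - (starRingEnd ℂ) p * q‖ := by
    simpa [norm_pos_iff] using hne
  rw [norm_div, div_lt_one h0]
  have hid := normSq_identity p q
  have h1 : (1 - normSq p) * (1 - normSq q) > 0 := by
    have := normSq_lt_one_iff.2 hp
    have := normSq_lt_one_iff.2 hq
    nlinarith
  have h2 : normSq (p - q) < normSq (1 - (starRingEnd ℂ) p * q) := by linarith
  have := Complex.sq_norm (p - q)
  have := Complex.sq_norm (1 - (starRingEnd ℂ) p * q)
  nlinarith [norm_nonneg (p - q), norm_nonneg (1 - (starRingEnd ℂ) p * q)]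


lemma aOf_special (a τ z₀ : ℂ) (ha : ‖a‖ < 1) (hτ : ‖τ‖ = 1)
    (hz₀ : ‖z₀‖ < 1) :
    aOf z₀ (τ * (z₀ - a) / (1 - (starRingEnd ℂ) a * z₀))
      (τ * (1 - a * (starRingEnd ℂ) z₀) / (1 - (starRingEnd ℂ) a * z₀)) = a := by
  have hτ0 : τ ≠ 0 := by intro h; rw [h] at hτ; simp at hτ
  have hτc : (starRingEnd ℂ) τ = τ⁻¹ := by
    rw [← Complex.norm_mul_exp_arg_mul_I τ, hτ]
    simp [← Complex.exp_conj, ← Complex.exp_neg]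
  have d1 : 1 - (starRingEnd ℂ) a * z₀ ≠ 0 := one_sub_mul_ne_zero (by simpa using ha) hz₀.le
  have d2 : 1 - a * (starRingEnd ℂ) z₀ ≠ 0 := one_sub_mul_ne_zero ha (by simpa using hz₀.le)
  have dz : 1 - z₀ * (starRingEnd ℂ) z₀ ≠ 0 := one_sub_mul_ne_zero hz₀ (by simpa using hz₀.le)
  unfold aOf
  simp only [map_div₀, map_mul, map_sub, map_one, Complex.conj_conj, hτc]
  have dz2 : -(z₀ * τ * (starRingEnd ℂ) z₀) + τ ≠ 0 := by
    have h := mul_ne_zero hτ0 dz; intro h2; apply h; linear_combination h2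
  have d1c : 1 - z₀ * (starRingEnd ℂ) a ≠ 0 := by
    intro h; apply d2; have h' := congrArg (starRingEnd ℂ) h
    simp only [map_sub, map_one, map_mul, Complex.conj_conj, map_zero] at h'; linear_combination h'
  field_simp [dz2, d1c]
  have dz3 : τ * (1 - a * (starRingEnd ℂ) z₀) - (starRingEnd ℂ) z₀ * (τ * (z₀ - a)) ≠ 0 := by
    intro h; apply mul_ne_zero hτ0 dz; linear_combination h
  rw [div_eq_iff (by intro h; apply dz; linear_combination h)]
  ring

lemma tauOf_special (a τ z₀ : ℂ) (ha : ‖a‖ < 1) (hτ : ‖τ‖ = 1)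
    (hz₀ : ‖z₀‖ < 1) :
    tauOf z₀ (τ * (z₀ - a) / (1 - (starRingEnd ℂ) a * z₀))
      (τ * (1 - a * (starRingEnd ℂ) z₀) / (1 - (starRingEnd ℂ) a * z₀)) = τ := by
  have hτ0 : τ ≠ 0 := by intro h; rw [h] at hτ; simp at hτ
  have hτc : (starRingEnd ℂ) τ = τ⁻¹ := by
    rw [← Complex.norm_mul_exp_arg_mul_I τ, hτ]
    simp [← Complex.exp_conj, ← Complex.exp_neg]
  have d1 : 1 - (starRingEnd ℂ) a * z₀ ≠ 0 := one_sub_mul_ne_zero (by simpa using ha) hz₀.le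
  have d2 : 1 - a * (starRingEnd ℂ) z₀ ≠ 0 := one_sub_mul_ne_zero ha (by simpa using hz₀.le)
  have dz : 1 - z₀ * (starRingEnd ℂ) z₀ ≠ 0 := one_sub_mul_ne_zero hz₀ (by simpa using hz₀.le)
  have dz2 : -(z₀ * τ * (starRingEnd ℂ) z₀) + τ ≠ 0 := by
    have h := mul_ne_zero hτ0 dz; intro h2; apply h; linear_combination h2
  unfold tauOf
  simp only [map_div₀, map_mul, map_sub, map_one, Complex.conj_conj, hτc]
  have d1c : 1 - z₀ * (starRingEnd ℂ) a ≠ 0 := by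
    intro h; apply d2; have h' := congrArg (starRingEnd ℂ) h
    simp only [map_sub, map_one, map_mul, Complex.conj_conj, map_zero] at h'; linear_combination h'
  field_simp [dz2, d1c]
  have dz4 : 1 - (starRingEnd ℂ) a * z₀ - z₀ * ((starRingEnd ℂ) z₀ - (starRingEnd ℂ) a) ≠ 0 := by
    intro h; apply dz; linear_combination h
  rw [div_eq_iff dz4]
  ring

lemma abs_aOf_lt_one {z₀ w₀ σ : ℂ} (hz₀ : ‖z₀‖ < 1) (hw₀ : ‖w₀‖ < 1)
    (hσ : ‖σ‖ = 1) : ‖aOf z₀ w₀ σ‖ < 1 := by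
  have : aOf z₀ w₀ σ = (z₀ - w₀ * (starRingEnd ℂ) σ) /
      (1 - (starRingEnd ℂ) z₀ * (w₀ * (starRingEnd ℂ) σ)) := by
    unfold aOf; ring_nf
  rw [this]
  exact quot_abs_lt_one hz₀ (by rw [norm_mul, Complex.norm_conj, hσ, mul_one]; exact hw₀)

lemma abs_tauOf_eq_one {z₀ w₀ σ : ℂ} (hz₀ : ‖z₀‖ < 1) (hw₀ : ‖w₀‖ < 1)
    (hσ : ‖σ‖ = 1) : ‖tauOf z₀ w₀ σ‖ = 1 := by
  have d5 : 1 - z₀ * (starRingEnd ℂ) w₀ * σ ≠ 0 := by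
    rw [mul_assoc]
    exact one_sub_mul_ne_zero hz₀ (by rw [norm_mul, Complex.norm_conj, hσ, mul_one]; exact hw₀.le)
  have hc : (starRingEnd ℂ) (1 - z₀ * (starRingEnd ℂ) w₀ * σ)
      = 1 - (starRingEnd ℂ) z₀ * w₀ * (starRingEnd ℂ) σ := by
    simp only [map_sub, map_mul, map_one, Complex.conj_conj]
  unfold tauOf
  rw [norm_div, norm_mul, hσ, one_mul, ← hc, Complex.norm_conj,
    div_self (by simpa [norm_ne_zero_iff] using d5)]

lemma stdMobius_mem_disk {z₀ w₀ σ : ℂ} (hz₀ : ‖z₀‖ < 1) (hw₀ : ‖w₀‖ < 1)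
    (hσ : ‖σ‖ = 1) {z : ℂ} (hz : ‖z‖ < 1) :
    ‖stdMobius z₀ w₀ σ z‖ < 1 := by
  have ha := abs_aOf_lt_one hz₀ hw₀ hσ
  have key : ‖(aOf z₀ w₀ σ - z) / (1 - (starRingEnd ℂ) (aOf z₀ w₀ σ) * z)‖ < 1 :=
    quot_abs_lt_one ha hz
  unfold stdMobius
  rw [mul_div_assoc, norm_mul, abs_tauOf_eq_one hz₀ hw₀ hσ, one_mul]
  calc ‖(z - aOf z₀ w₀ σ) / (1 - (starRingEnd ℂ) (aOf z₀ w₀ σ) * z)‖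
      = ‖(aOf z₀ w₀ σ - z) / (1 - (starRingEnd ℂ) (aOf z₀ w₀ σ) * z)‖ := by
        rw [div_eq_mul_inv, div_eq_mul_inv, norm_mul, norm_mul, norm_sub_rev z]
    _ < 1 := key

lemma stdMobius_apply_center {z₀ w₀ σ : ℂ} (hz₀ : ‖z₀‖ < 1)
    (hw₀ : ‖w₀‖ < 1) (hσ : ‖σ‖ = 1) :
    stdMobius z₀ w₀ σ z₀ = w₀ := by
  have hσ0 : σ ≠ 0 := by intro h; rw [h] at hσ; simp at hσ
  have hσc : (starRingEnd ℂ) σ = σ⁻¹ := by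
    rw [← Complex.norm_mul_exp_arg_mul_I σ, hσ]
    simp [← Complex.exp_conj, ← Complex.exp_neg]
  have dz : 1 - z₀ * (starRingEnd ℂ) z₀ ≠ 0 :=
    one_sub_mul_ne_zero hz₀ (by simpa using hz₀.le)
  have d4 : 1 - (starRingEnd ℂ) z₀ * w₀ * (starRingEnd ℂ) σ ≠ 0 := by
    rw [mul_assoc]
    exact one_sub_mul_ne_zero (by simpa using hz₀)
      (by rw [norm_mul, Complex.norm_conj, hσ, mul_one]; exact hw₀.le)
  have d5 : 1 - z₀ * (starRingEnd ℂ) w₀ * σ ≠ 0 := by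
    rw [mul_assoc]
    exact one_sub_mul_ne_zero hz₀ (by rw [norm_mul, Complex.norm_conj, hσ, mul_one]; exact hw₀.le)
  have h1 : z₀ - aOf z₀ w₀ σ
      = w₀ * (starRingEnd ℂ) σ * (1 - z₀ * (starRingEnd ℂ) z₀)
        / (1 - (starRingEnd ℂ) z₀ * w₀ * (starRingEnd ℂ) σ) := by
    unfold aOf; rw [eq_div_iff d4, sub_mul, div_mul_cancel₀ _ d4]; ring
  have h2 : 1 - (starRingEnd ℂ) (aOf z₀ w₀ σ) * z₀
      = (1 - z₀ * (starRingEnd ℂ) z₀) / (1 - z₀ * (starRingEnd ℂ) w₀ * σ) := by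
    unfold aOf
    simp only [map_div₀, map_mul, map_sub, map_one, Complex.conj_conj]
    rw [div_mul_eq_mul_div, one_sub_div d5, div_left_inj' d5]; ring
  show tauOf z₀ w₀ σ * (z₀ - aOf z₀ w₀ σ) / (1 - (starRingEnd ℂ) (aOf z₀ w₀ σ) * z₀) = w₀
  set u := 1 - (starRingEnd ℂ) z₀ * w₀ * (starRingEnd ℂ) σ with hu
  set v := 1 - z₀ * (starRingEnd ℂ) w₀ * σ with hv
  set d := 1 - z₀ * (starRingEnd ℂ) z₀ with hd
  have h3 : tauOf z₀ w₀ σ = σ * u / v := rfl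
  rw [h1, h2, h3, hσc]
  field_simp


lemma mobius_eq_std (a τ z₀ : ℂ) (ha : ‖a‖ < 1) (hτ : ‖τ‖ = 1)
    (hz₀ : ‖z₀‖ < 1) (z : ℂ) :
    τ * (z - a) / (1 - (starRingEnd ℂ) a * z)
      = stdMobius z₀ (τ * (z₀ - a) / (1 - (starRingEnd ℂ) a * z₀))
          (τ * (1 - a * (starRingEnd ℂ) z₀) / (1 - (starRingEnd ℂ) a * z₀)) z := by
  unfold stdMobius
  rw [aOf_special a τ z₀ ha hτ hz₀, tauOf_special a τ z₀ ha hτ hz₀]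

lemma sigma_abs_one {a τ z₀ : ℂ} (ha : ‖a‖ < 1) (hτ : ‖τ‖ = 1)
    (hz₀ : ‖z₀‖ < 1) :
    ‖τ * (1 - a * (starRingEnd ℂ) z₀) / (1 - (starRingEnd ℂ) a * z₀)‖ = 1 := by
  have d1 : 1 - (starRingEnd ℂ) a * z₀ ≠ 0 := one_sub_mul_ne_zero (by simpa using ha) hz₀.le
  have hc : (starRingEnd ℂ) (1 - (starRingEnd ℂ) a * z₀) = 1 - a * (starRingEnd ℂ) z₀ := by
    simp only [map_sub, map_mul, map_one, Complex.conj_conj]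
  rw [norm_div, norm_mul, hτ, one_mul, ← hc, Complex.norm_conj,
    div_self (by simpa [norm_ne_zero_iff] using d1)]

section geom
variable {z₀ : ℂ} {R : ℝ}

/-- auxiliary continuous dgauge -/
noncomputable def dgauge (z₀ : ℂ) (R : ℝ) (z : ℂ) : ℝ :=
  ‖z - z₀‖ - Real.tanh R * ‖1 - (starRingEnd ℂ) z₀ * z‖

lemma tanh_lt_one' (x : ℝ) : Real.tanh x < 1 := by
  rw [Real.tanh_eq_sinh_div_cosh, div_lt_one (Real.cosh_pos x)]
  exact Real.sinh_lt_cosh x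

lemma continuous_dgauge : Continuous (dgauge z₀ R) := by
  unfold dgauge
  exact (continuous_norm.comp (continuous_id.sub continuous_const)).sub
    (continuous_const.mul (continuous_norm.comp
      (continuous_const.sub (continuous_const.mul continuous_id))))

lemma hypDisk_eq (hz₀ : ‖z₀‖ < 1) (hR : 0 < R) :
    hypDisk z₀ R = Metric.ball (0:ℂ) 1 ∩ {z | dgauge z₀ R z < 0} := by
  ext z
  simp only [hypDisk, Set.mem_setOf_eq, Set.mem_inter_iff, Metric.mem_ball,
    dist_zero_right]
  constructor
  · rintro ⟨h1, h2⟩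
    refine ⟨h1, ?_⟩
    have hd : 1 - (starRingEnd ℂ) z₀ * z ≠ 0 :=
      one_sub_mul_ne_zero (by simpa using hz₀) h1.le
    have hd0 : 0 < ‖1 - (starRingEnd ℂ) z₀ * z‖ := by
      simpa [norm_pos_iff] using hd
    rw [norm_div, div_lt_iff₀ hd0] at h2
    unfold dgauge; linarith
  · rintro ⟨h1, h2⟩
    refine ⟨h1, ?_⟩
    have hd : 1 - (starRingEnd ℂ) z₀ * z ≠ 0 :=
      one_sub_mul_ne_zero (by simpa using hz₀) h1.le
    have hd0 : 0 < ‖1 - (starRingEnd ℂ) z₀ * z‖ := by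
      simpa [norm_pos_iff] using hd
    rw [norm_div, div_lt_iff₀ hd0]
    unfold dgauge at h2; linarith

lemma isOpen_hypDisk (hz₀ : ‖z₀‖ < 1) (hR : 0 < R) : IsOpen (hypDisk z₀ R) := by
  rw [hypDisk_eq hz₀ hR]
  exact Metric.isOpen_ball.inter (isOpen_lt continuous_dgauge continuous_const)

/-- compact envelope of the hyperbolic disk -/
noncomputable def Kset (z₀ : ℂ) (R : ℝ) : Set ℂ :=
  Metric.closedBall (0:ℂ) 1 ∩ {z | dgauge z₀ R z ≤ 0}

lemma isCompact_Kset : IsCompact (Kset z₀ R) :=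
  (isCompact_closedBall _ _).inter_right (isClosed_le continuous_dgauge continuous_const)

lemma hypDisk_subset_Kset (hz₀ : ‖z₀‖ < 1) (hR : 0 < R) :
    hypDisk z₀ R ⊆ Kset z₀ R := by
  rw [hypDisk_eq hz₀ hR]
  rintro z ⟨h1, h2⟩
  simp only [Set.mem_setOf_eq] at h2
  exact ⟨Metric.ball_subset_closedBall h1, le_of_lt h2⟩

lemma Kset_subset_unitDisk (hz₀ : ‖z₀‖ < 1) (hR : 0 < R) :
    Kset z₀ R ⊆ unitDisk := by
  rintro z ⟨h1, h2⟩
  simp only [Metric.mem_closedBall, dist_zero_right] at h1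
  simp only [unitDisk, Set.mem_setOf_eq]
  rcases lt_or_eq_of_le h1 with h | h
  · exact h
  · exfalso
    -- |z| = 1, so |1 - conj z₀ * z| = |conj z * (1 - conj z₀ * z)| = |conj z - conj z₀| = |z - z₀|
    have hz1 : ‖z‖ = 1 := h
    have hzz : (starRingEnd ℂ) z * z = 1 := by
      rw [mul_comm, Complex.mul_conj]
      norm_cast
      rw [Complex.normSq_eq_norm_sq, hz1]; norm_num
    have he : (1:ℂ) - (starRingEnd ℂ) z₀ * z = (starRingEnd ℂ) (z - z₀) * z := by
      rw [map_sub, sub_mul]; linear_combination -hzz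
    have key : ‖1 - (starRingEnd ℂ) z₀ * z‖ = ‖z - z₀‖ := by
      rw [he, norm_mul, Complex.norm_conj, hz1, mul_one]
    have hzne : (0:ℝ) < ‖z - z₀‖ := by
      rw [norm_pos_iff, sub_ne_zero]
      intro he2; rw [← he2] at hz₀; exact absurd hz₀ (by rw [hz1]; norm_num)
    have ht1 : Real.tanh R < 1 := tanh_lt_one' R
    have : dgauge z₀ R z > 0 := by
      unfold dgauge; rw [key]; nlinarith
    simp only [Set.mem_setOf_eq] at h2; linarith

end geom

section cont
variable {z₀ w₀ : ℂ} {R : ℝ}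

lemma circle_eq : {σ : ℂ | ‖σ‖ = 1} = Metric.sphere (0:ℂ) 1 := by
  ext σ; simp

lemma volH_hypDisk_lt_top (hz₀ : ‖z₀‖ < 1) (hR : 0 < R) :
    volH (hypDisk z₀ R) < ⊤ := by
  have hKc : IsCompact (Kset z₀ R) := isCompact_Kset
  have hKd : Kset z₀ R ⊆ unitDisk := Kset_subset_unitDisk hz₀ hR
  have hcont : ContinuousOn (fun z : ℂ => ((1 - ‖z‖ ^ 2) ^ 2)⁻¹) (Kset z₀ R) := by
    apply ContinuousOn.inv₀
    · exact (((continuous_const.sub (continuous_norm.pow 2)).pow 2)).continuousOn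
    · intro z hz
      have : ‖z‖ < 1 := hKd hz
      have : (0:ℝ) < 1 - ‖z‖ ^ 2 := by nlinarith [norm_nonneg z]
      positivity
  obtain ⟨D, hD⟩ := hKc.exists_bound_of_continuousOn hcont
  have hmeas : MeasurableSet (hypDisk z₀ R) := (isOpen_hypDisk hz₀ hR).measurableSet
  have : volH (hypDisk z₀ R) = ∫⁻ z in hypDisk z₀ R,
      ENNReal.ofReal (((1 - ‖z‖ ^ 2) ^ 2)⁻¹) ∂volume := by
    unfold volH; rw [withDensity_apply _ hmeas]
  rw [this]
  calc ∫⁻ z in hypDisk z₀ R, ENNReal.ofReal (((1 - ‖z‖ ^ 2) ^ 2)⁻¹) ∂volume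
      ≤ ∫⁻ _ in hypDisk z₀ R, ENNReal.ofReal D ∂volume := by
        apply setLIntegral_mono' hmeas
        intro z hz
        apply ENNReal.ofReal_le_ofReal
        have h := hD z (hypDisk_subset_Kset hz₀ hR hz)
        rw [Real.norm_eq_abs] at h
        exact (le_abs_self _).trans h
    _ = ENNReal.ofReal D * volume (hypDisk z₀ R) := setLIntegral_const _ _
    _ ≤ ENNReal.ofReal D * volume (Metric.ball (0:ℂ) 1) := by
        gcongr
        rw [hypDisk_eq hz₀ hR]; exact Set.inter_subset_left
    _ < ⊤ := ENNReal.mul_lt_top ofReal_lt_top measure_ball_lt_top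

lemma continuousOn_inner (hz₀ : ‖z₀‖ < 1) (hw₀ : ‖w₀‖ < 1) :
    ContinuousOn (fun p : ℂ × ℂ => stdMobius z₀ w₀ p.1 p.2)
      ({σ : ℂ | ‖σ‖ = 1} ×ˢ unitDisk) := by
  have caOf : ContinuousOn (fun p : ℂ × ℂ => aOf z₀ w₀ p.1)
      ({σ : ℂ | ‖σ‖ = 1} ×ˢ unitDisk) := by
    apply ContinuousOn.div
    · exact (continuous_const.sub (continuous_const.mul
        (Complex.continuous_conj.comp continuous_fst))).continuousOn
    · exact (continuous_const.sub (continuous_const.mul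
        (Complex.continuous_conj.comp continuous_fst))).continuousOn
    · rintro ⟨σ, z⟩ ⟨hσ, hz⟩
      simp only [Set.mem_setOf_eq] at hσ
      rw [mul_assoc]
      exact one_sub_mul_ne_zero (by simpa using hz₀)
        (by rw [norm_mul, Complex.norm_conj, hσ, mul_one]; exact hw₀.le)
  have ctau : ContinuousOn (fun p : ℂ × ℂ => tauOf z₀ w₀ p.1)
      ({σ : ℂ | ‖σ‖ = 1} ×ˢ unitDisk) := by
    apply ContinuousOn.div
    · exact (continuous_fst.mul (continuous_const.sub (continuous_const.mul
        (Complex.continuous_conj.comp continuous_fst)))).continuousOn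
    · exact (continuous_const.sub (continuous_const.mul
        continuous_fst)).continuousOn
    · rintro ⟨σ, z⟩ ⟨hσ, hz⟩
      simp only [Set.mem_setOf_eq] at hσ
      rw [mul_assoc]
      exact one_sub_mul_ne_zero hz₀
        (by rw [norm_mul, Complex.norm_conj, hσ, mul_one]; exact hw₀.le)
  apply ContinuousOn.div
  · exact ctau.mul (continuous_snd.continuousOn.sub caOf)
  · exact continuousOn_const.sub ((Complex.continuous_conj.comp_continuousOn caOf).mul
      continuous_snd.continuousOn)
  · rintro ⟨σ, z⟩ ⟨hσ, hz⟩
    simp only [Set.mem_setOf_eq] at hσ hz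
    have hzlt : ‖z‖ < 1 := hz
    exact one_sub_mul_ne_zero (by simpa using abs_aOf_lt_one hz₀ hw₀ hσ) hzlt.le
end cont

lemma hypDisk_subset_unitDisk : hypDisk z₀ R ⊆ unitDisk := fun _ hz => hz.1

lemma Phi_contOn {μ ν : ℂ → ℝ} (hμ : ContinuousOn μ unitDisk) (hν : ContinuousOn ν unitDisk)
    {z₀ w₀ : ℂ} (hz₀ : ‖z₀‖ < 1) (hw₀ : ‖w₀‖ < 1) {R : ℝ} (hR : 0 < R) :
    ContinuousOn (fun σ : ℂ => Phi R μ ν z₀ w₀ σ) {σ : ℂ | ‖σ‖ = 1} := by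
  classical
  have hUopen : IsOpen unitDisk := by
    have : unitDisk = Metric.ball (0:ℂ) 1 := by
      ext z; simp [unitDisk]
    rw [this]; exact Metric.isOpen_ball
  have hs : MeasurableSet (hypDisk z₀ R) := (isOpen_hypDisk hz₀ hR).measurableSet
  have hsub : hypDisk z₀ R ⊆ unitDisk := hypDisk_subset_unitDisk
  -- joint continuity of integrand
  have hF : ContinuousOn (fun p : ℂ × ℂ => |μ p.2 - ν (stdMobius z₀ w₀ p.1 p.2)|)
      ({σ : ℂ | ‖σ‖ = 1} ×ˢ unitDisk) := by
    apply ContinuousOn.abs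
    apply ContinuousOn.sub
    · exact hμ.comp continuous_snd.continuousOn (fun p hp => hp.2)
    · exact hν.comp (continuousOn_inner hz₀ hw₀)
        (fun p hp => stdMobius_mem_disk hz₀ hw₀ hp.1 hp.2)
  -- bound on the compact envelope
  have hS'c : IsCompact ({σ : ℂ | ‖σ‖ = 1} ×ˢ Kset z₀ R) := by
    rw [circle_eq]
    exact (isCompact_sphere _ _).prod isCompact_Kset
  obtain ⟨C, hC⟩ := hS'c.exists_bound_of_continuousOn
    (hF.mono (Set.prod_mono_right (Kset_subset_unitDisk hz₀ hR)))
  -- indicator family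
  set G : ℂ → ℂ → ℝ≥0∞ := fun σ => (hypDisk z₀ R).indicator
    (fun z => ENNReal.ofReal |μ z - ν (stdMobius z₀ w₀ σ z)|) with hG
  have hPhiEq : (fun σ : ℂ => Phi R μ ν z₀ w₀ σ) = fun σ => ∫⁻ z, G σ z ∂volH := by
    funext σ
    rw [hG]
    unfold Phi
    rw [lintegral_indicator hs]
  rw [hPhiEq]
  intro σ₀ hσ₀
  have hσ₀' : ‖σ₀‖ = 1 := hσ₀
  -- continuity of integrand in σ for fixed z
  have hlim : ∀ z ∈ hypDisk z₀ R,
      ContinuousWithinAt (fun σ => ENNReal.ofReal |μ z - ν (stdMobius z₀ w₀ σ z)|)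
        {σ : ℂ | ‖σ‖ = 1} σ₀ := by
    intro z hz
    have h1 : ContinuousWithinAt (fun σ => stdMobius z₀ w₀ σ z)
        {σ : ℂ | ‖σ‖ = 1} σ₀ := by
      have hmaps : Set.MapsTo (fun σ : ℂ => (σ, z)) {σ : ℂ | ‖σ‖ = 1}
          ({σ : ℂ | ‖σ‖ = 1} ×ˢ unitDisk) := fun σ hσ => ⟨hσ, hsub hz⟩
      have hc : ContinuousWithinAt (fun p : ℂ × ℂ => stdMobius z₀ w₀ p.1 p.2)
          ({σ : ℂ | ‖σ‖ = 1} ×ˢ unitDisk) (σ₀, z) :=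
        continuousOn_inner hz₀ hw₀ _ ⟨hσ₀, hsub hz⟩
      have hmap : ContinuousWithinAt (fun σ : ℂ => (σ, z))
          {σ : ℂ | ‖σ‖ = 1} σ₀ :=
        (continuous_id.prodMk continuous_const).continuousWithinAt
      exact ContinuousWithinAt.comp (g := fun p : ℂ × ℂ => stdMobius z₀ w₀ p.1 p.2)
        (f := fun σ : ℂ => (σ, z)) hc hmap hmaps
    have h2 : ContinuousAt ν (stdMobius z₀ w₀ σ₀ z) :=
      hν.continuousAt (hUopen.mem_nhds (stdMobius_mem_disk hz₀ hw₀ hσ₀' hz.1))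
    have h3 : ContinuousWithinAt (fun σ => ν (stdMobius z₀ w₀ σ z))
        {σ : ℂ | ‖σ‖ = 1} σ₀ :=
      ContinuousAt.comp_continuousWithinAt (g := ν)
        (f := fun σ => stdMobius z₀ w₀ σ z) h2 h1
    have h4 : ContinuousWithinAt (fun σ => |μ z - ν (stdMobius z₀ w₀ σ z)|)
        {σ : ℂ | ‖σ‖ = 1} σ₀ := (continuousWithinAt_const.sub h3).abs
    exact ENNReal.continuous_ofReal.continuousAt.comp_continuousWithinAt h4
  -- dominated convergence
  apply tendsto_lintegral_filter_of_dominated_convergence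
    ((hypDisk z₀ R).indicator (fun _ => ENNReal.ofReal C))
  · filter_upwards [self_mem_nhdsWithin] with σ hσ
    have hσ' : ‖σ‖ = 1 := hσ
    have hcont : ContinuousOn (fun z => ENNReal.ofReal |μ z - ν (stdMobius z₀ w₀ σ z)|)
        (hypDisk z₀ R) := by
      apply ENNReal.continuous_ofReal.comp_continuousOn
      have hmaps : Set.MapsTo (fun z : ℂ => (σ, z)) (hypDisk z₀ R)
          ({σ : ℂ | ‖σ‖ = 1} ×ˢ unitDisk) := fun z hz => ⟨hσ, hsub hz⟩
      exact (hF.comp ((continuous_const.prodMk continuous_id).continuousOn) hmaps)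
    have hmeas := ContinuousOn.measurable_piecewise (g := fun _ => (0:ℝ≥0∞)) hcont
      continuousOn_const hs
    have heq : G σ = (hypDisk z₀ R).piecewise
        (fun z => ENNReal.ofReal |μ z - ν (stdMobius z₀ w₀ σ z)|) (fun _ => (0:ℝ≥0∞)) := by
      funext x
      by_cases hx : x ∈ hypDisk z₀ R <;>
        simp [hG, Set.indicator, Set.piecewise, hx]
    rw [heq]
    exact hmeas
  · filter_upwards [self_mem_nhdsWithin] with σ hσ
    apply Filter.Eventually.of_forall
    intro z
    by_cases hz : z ∈ hypDisk z₀ R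
    · rw [hG]
      simp only [Set.indicator_of_mem hz]
      apply ENNReal.ofReal_le_ofReal
      have h := hC (σ, z) ⟨hσ, hypDisk_subset_Kset hz₀ hR hz⟩
      rw [Real.norm_eq_abs, _root_.abs_abs] at h
      exact h
    · rw [hG]; simp only [Set.indicator_of_notMem hz]; exact le_refl _
  · rw [lintegral_indicator hs, setLIntegral_const]
    exact (ENNReal.mul_lt_top ofReal_lt_top (volH_hypDisk_lt_top hz₀ hR)).ne
  · apply Filter.Eventually.of_forall
    intro z
    by_cases hz : z ∈ hypDisk z₀ R
    · have : ∀ σ, G σ z = ENNReal.ofReal |μ z - ν (stdMobius z₀ w₀ σ z)| := by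
        intro σ; rw [hG]; simp only [Set.indicator_of_mem hz]
      simp only [this]
      exact hlim z hz
    · have : ∀ σ, G σ z = 0 := by
        intro σ; rw [hG]; simp only [Set.indicator_of_notMem hz]
      simp only [this]
      exact tendsto_const_nhds

theorem Phi_continuous_and_dR_attained (μ ν : ℂ → ℝ)
    (hμ : ContinuousOn μ unitDisk) (hν : ContinuousOn ν unitDisk)
    (z₀ w₀ : ℂ) (hz₀ : z₀ ∈ unitDisk) (hw₀ : w₀ ∈ unitDisk) (R : ℝ) (hR : 0 < R) :
    ContinuousOn (fun σ : ℂ => Phi R μ ν z₀ w₀ σ) {σ : ℂ | ‖σ‖ = 1} ∧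
    ∃ m : ℂ → ℂ, IsDiskMobius m ∧ m z₀ = w₀ ∧
      (∫⁻ z in hypDisk z₀ R, ENNReal.ofReal |μ z - ν (m z)| ∂volH)
        = dR R μ ν z₀ w₀ := by
  have hz₀' : ‖z₀‖ < 1 := hz₀
  have hw₀' : ‖w₀‖ < 1 := hw₀
  have hcont := Phi_contOn hμ hν hz₀' hw₀' hR
  refine ⟨hcont, ?_⟩
  -- the circle is compact and nonempty
  have hcomp : IsCompact {σ : ℂ | ‖σ‖ = 1} := by
    rw [circle_eq]; exact isCompact_sphere _ _
  have hne : ({σ : ℂ | ‖σ‖ = 1} : Set ℂ).Nonempty := ⟨1, by simp⟩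
  obtain ⟨σs, hσs, hmin⟩ := hcomp.exists_isMinOn hne hcont
  have hσs' : ‖σs‖ = 1 := hσs
  refine ⟨stdMobius z₀ w₀ σs, ⟨aOf z₀ w₀ σs, tauOf z₀ w₀ σs,
    abs_aOf_lt_one hz₀' hw₀' hσs', abs_tauOf_eq_one hz₀' hw₀' hσs', fun z => rfl⟩,
    stdMobius_apply_center hz₀' hw₀' hσs', ?_⟩
  apply le_antisymm
  · -- integral for σs is ≤ every competitor
    apply le_iInf
    rintro ⟨m', hm'⟩
    obtain ⟨⟨a, τ, ha, hτ, hform⟩, hm'z₀⟩ := hm'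
    have hw₀eq : w₀ = τ * (z₀ - a) / (1 - (starRingEnd ℂ) a * z₀) := by
      rw [← hm'z₀, hform z₀]
    have hmeq : ∀ z : ℂ, m' z
        = stdMobius z₀ w₀ (τ * (1 - a * (starRingEnd ℂ) z₀) / (1 - (starRingEnd ℂ) a * z₀)) z := by
      intro z
      rw [hform z, mobius_eq_std a τ z₀ ha hτ hz₀', ← hw₀eq]
    have hσ'mem : (τ * (1 - a * (starRingEnd ℂ) z₀) / (1 - (starRingEnd ℂ) a * z₀))
        ∈ {σ : ℂ | ‖σ‖ = 1} := sigma_abs_one ha hτ hz₀'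
    have heq : (∫⁻ z in hypDisk z₀ R, ENNReal.ofReal |μ z - ν (m' z)| ∂volH : ℝ≥0∞)
        = Phi R μ ν z₀ w₀ (τ * (1 - a * (starRingEnd ℂ) z₀) / (1 - (starRingEnd ℂ) a * z₀)) := by
      unfold Phi
      congr 1
      funext z
      rw [hmeq z]
    show Phi R μ ν z₀ w₀ σs ≤ _
    rw [heq]
    exact hmin hσ'mem
  · exact iInf_le _ ((⟨stdMobius z₀ w₀ σs, ⟨aOf z₀ w₀ σs, tauOf z₀ w₀ σs,
      abs_aOf_lt_one hz₀' hw₀' hσs', abs_tauOf_eq_one hz₀' hw₀' hσs', fun z => rfl⟩,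
      stdMobius_apply_center hz₀' hw₀' hσs'⟩ : {m : ℂ → ℂ // IsDiskMobius m ∧ m z₀ = w₀}))

end
end

section
/- Let μ : 𝔻 → ℝ be continuous and nonnegative with ∫_𝔻 μ dvol_H = 1, let R > 0, and let m be a disk Möbius transformation with inverse m⁻¹ on 𝔻. Set ν := μ ∘ m⁻¹. Then ν is continuous and nonnegative with ∫_𝔻 ν dvol_H = 1, and T^R_d(μ, ν) = 0. -/
open Complex MeasureTheory ENNReal

noncomputable section

namespace MobiusAux

def mob (a τ : ℂ) (z : ℂ) : ℂ := τ * (z - a) / (1 - (starRingEnd ℂ) a * z)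

lemma measurable_mob (a τ : ℂ) : Measurable (mob a τ) :=
  ((measurable_const.mul (measurable_id.sub measurable_const)).div
    (measurable_const.sub (measurable_const.mul measurable_id)))

lemma denom_ne {a : ℂ} (ha : ‖a‖ < 1) {z : ℂ} (hz : ‖z‖ < 1) :
    1 - (starRingEnd ℂ) a * z ≠ 0 := by
  intro h
  have h1 : (starRingEnd ℂ) a * z = 1 := by linear_combination -h
  have h2 : ‖a‖ * ‖z‖ = 1 := by
    have := congrArg (‖·‖) h1
    simpa [map_mul] using this
  nlinarith [norm_nonneg a, norm_nonneg z]

lemma key (a z : ℂ) :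
    normSq (1 - (starRingEnd ℂ) a * z) - normSq (z - a)
      = (1 - normSq a) * (1 - normSq z) := by
  simp only [normSq_apply, sub_re, sub_im, mul_re, mul_im, one_re, one_im, conj_re, conj_im]
  ring

lemma normSq_lt_one {z : ℂ} (hz : ‖z‖ < 1) : normSq z < 1 := by
  rw [← Complex.sq_norm]; nlinarith [norm_nonneg z]

lemma maps_disk {a τ : ℂ} (ha : ‖a‖ < 1) (hτ : ‖τ‖ = 1)
    {z : ℂ} (hz : ‖z‖ < 1) : ‖mob a τ z‖ < 1 := by
  have hd := denom_ne ha hz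
  have hd' : 0 < ‖1 - (starRingEnd ℂ) a * z‖ := norm_pos_iff.mpr hd
  rw [mob, norm_div, norm_mul, hτ, one_mul, div_lt_one hd']
  have hk := key a z
  have h1 : normSq (z - a) < normSq (1 - (starRingEnd ℂ) a * z) := by
    nlinarith [normSq_lt_one ha, normSq_lt_one hz]
  have e1 := Complex.sq_norm (z - a)
  have e2 := Complex.sq_norm (1 - (starRingEnd ℂ) a * z)
  nlinarith [norm_nonneg (z - a), norm_nonneg (1 - (starRingEnd ℂ) a * z)]

lemma one_sub_sq {a τ : ℂ} (ha : ‖a‖ < 1) (hτ : ‖τ‖ = 1)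
    {z : ℂ} (hz : ‖z‖ < 1) :
    1 - ‖mob a τ z‖ ^ 2
      = (1 - normSq a) * (1 - normSq z) / normSq (1 - (starRingEnd ℂ) a * z) := by
  have hd := denom_ne ha hz
  have hd0 : normSq (1 - (starRingEnd ℂ) a * z) ≠ 0 := by
    simpa [Complex.normSq_eq_zero] using hd
  have hτ2 : normSq τ = 1 := by rw [← Complex.sq_norm, hτ]; norm_num
  rw [Complex.sq_norm, mob, map_div₀, map_mul, hτ2, one_mul]
  have hk := key a z
  rw [eq_div_iff hd0, sub_mul, div_mul_cancel₀ _ hd0]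
  linarith [hk]



lemma hasDerivAt_mob (a τ : ℂ) {z : ℂ} (hd : 1 - (starRingEnd ℂ) a * z ≠ 0) :
    HasDerivAt (mob a τ)
      (τ * (1 - (starRingEnd ℂ) a * a) / (1 - (starRingEnd ℂ) a * z) ^ 2) z := by
  have h1 : HasDerivAt (fun z : ℂ => τ * (z - a)) τ z := by
    simpa using ((hasDerivAt_id z).sub_const a).const_mul τ
  have h2 : HasDerivAt (fun z : ℂ => 1 - (starRingEnd ℂ) a * z) (-((starRingEnd ℂ) a)) z := by
    simpa using ((hasDerivAt_id z).const_mul ((starRingEnd ℂ) a)).const_sub 1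
  have := h1.div h2 hd
  have e : mob a τ = (fun z => τ * (z - a)) / fun z => 1 - (starRingEnd ℂ) a * z := rfl
  rw [e]
  exact this.congr_deriv (by ring)

lemma det_mul_c (c : ℂ) :
    (((1 : ℂ →L[ℂ] ℂ).smulRight c).restrictScalars ℝ).det = normSq c := by
  have h : ((((1 : ℂ →L[ℂ] ℂ).smulRight c).restrictScalars ℝ : ℂ →L[ℝ] ℂ) : ℂ →ₗ[ℝ] ℂ)
      = (Algebra.lmul ℝ ℂ) c := by
    refine LinearMap.ext fun z => ?_
    simp [mul_comm]
  rw [ContinuousLinearMap.det, h, ← Algebra.norm_apply, Algebra.norm_complex_apply]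

lemma injOn_mob {a τ : ℂ} (ha : ‖a‖ < 1) (hτ : ‖τ‖ = 1) :
    Set.InjOn (mob a τ) {z : ℂ | ‖z‖ < 1} := by
  intro z1 h1 z2 h2 h
  have hτ0 : τ ≠ 0 := by intro h0; rw [h0] at hτ; simp at hτ
  have hd1 : 1 - (starRingEnd ℂ) a * z1 ≠ 0 := denom_ne ha h1
  have hd2 : 1 - (starRingEnd ℂ) a * z2 ≠ 0 := denom_ne ha h2
  rw [mob, mob, div_eq_div_iff hd1 hd2] at h
  have haa : (1 : ℂ) - (starRingEnd ℂ) a * a ≠ 0 := denom_ne ha ha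
  have h3 : ((1 : ℂ) - (starRingEnd ℂ) a * a) * τ * (z1 - z2) = 0 := by linear_combination h
  rcases mul_eq_zero.mp h3 with h4 | h4
  · exact absurd h4 (mul_ne_zero haa hτ0)
  · exact sub_eq_zero.mp h4

lemma conj_mul_self_eq {τ : ℂ} (hτ : ‖τ‖ = 1) : (starRingEnd ℂ) τ * τ = 1 := by
  have hτ2 : normSq τ = 1 := by rw [← Complex.sq_norm, hτ]; norm_num
  rw [mul_comm, Complex.mul_conj, hτ2]; norm_num

lemma abs_inv_a {a τ : ℂ} (ha : ‖a‖ < 1) (hτ : ‖τ‖ = 1) :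
    ‖-(a * τ)‖ < 1 := by
  rwa [norm_neg, norm_mul, hτ, mul_one]

lemma left_inv {a τ : ℂ} (ha : ‖a‖ < 1) (hτ : ‖τ‖ = 1)
    {z : ℂ} (hz : ‖z‖ < 1) :
    mob (-(a * τ)) ((starRingEnd ℂ) τ) (mob a τ z) = z := by
  have hτ0 : τ ≠ 0 := by intro h0; rw [h0] at hτ; simp at hτ
  have hd := denom_ne ha hz
  have hττ := conj_mul_self_eq hτ
  have hcτ : (starRingEnd ℂ) τ = τ⁻¹ := eq_inv_of_mul_eq_one_left hττ
  have hd2 : 1 - (starRingEnd ℂ) (-(a * τ)) * (mob a τ z) ≠ 0 :=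
    denom_ne (abs_inv_a ha hτ) (maps_disk ha hτ hz)
  have haa : (1 : ℂ) - (starRingEnd ℂ) a * a ≠ 0 := denom_ne ha ha
  simp only [mob, map_neg, map_mul, hcτ] at hd2 ⊢
  field_simp at hd2 ⊢
  ring_nf
  have hD : (τ - τ * a * (starRingEnd ℂ) a) ≠ 0 := by
    have h5 : τ - τ * a * (starRingEnd ℂ) a = τ * (1 - (starRingEnd ℂ) a * a) := by ring
    rw [h5]; exact mul_ne_zero hτ0 haa
  field_simp [hD]
  have haa' : (1:ℂ) - a * (starRingEnd ℂ) a ≠ 0 := by rw [mul_comm]; exact haa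
  field_simp
  ring

end MobiusAux

namespace MobiusAux

lemma right_inv {a τ : ℂ} (ha : ‖a‖ < 1) (hτ : ‖τ‖ = 1)
    {w : ℂ} (hw : ‖w‖ < 1) :
    mob a τ (mob (-(a * τ)) ((starRingEnd ℂ) τ) w) = w := by
  have ha' : ‖-(a * τ)‖ < 1 := abs_inv_a ha hτ
  have hτ' : ‖(starRingEnd ℂ) τ‖ = 1 := by rwa [Complex.norm_conj]
  have h := left_inv ha' hτ' hw
  have e1 : -(-(a * τ) * (starRingEnd ℂ) τ) = a := by
    rw [neg_mul, neg_neg, mul_assoc, Complex.mul_conj]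
    have hτ2 : normSq τ = 1 := by rw [← Complex.sq_norm, hτ]; norm_num
    rw [hτ2]; norm_num
  rw [Complex.conj_conj, e1] at h
  exact h

lemma measurableSet_unitDisk : MeasurableSet unitDisk :=
  (isOpen_lt continuous_norm continuous_const).measurableSet

lemma measurable_g0 :
    Measurable (fun z : ℂ => ENNReal.ofReal (((1 - ‖z‖ ^ 2) ^ 2)⁻¹)) :=
  (((continuous_const.sub (continuous_norm.pow 2)).pow 2).measurable.inv).ennreal_ofReal

lemma muH_apply (μ : ℂ → ℝ) {t : Set ℂ} (ht : MeasurableSet t) :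
    muH μ t = ∫⁻ z in t ∩ unitDisk,
      ENNReal.ofReal (((1 - ‖z‖ ^ 2) ^ 2)⁻¹) * ENNReal.ofReal (μ z) ∂volume := by
  rw [muH, withDensity_apply _ ht, Measure.restrict_restrict ht, volH,
    setLIntegral_withDensity_eq_setLIntegral_mul_non_measurable volume measurable_g0 _
      (ht.inter measurableSet_unitDisk) (ae_of_all _ fun x => ENNReal.ofReal_lt_top)]
  rfl

lemma density_identity {A Z D : ℝ} (hA : 0 < A) (hZ : 0 < Z) (hD : 0 < D) :
    (A ^ 2 / D ^ 2) * ((A * Z / D) ^ 2)⁻¹ = (Z ^ 2)⁻¹ := by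
  field_simp

lemma map_mob_muH (μ : ℂ → ℝ) {a τ : ℂ} (ha : ‖a‖ < 1) (hτ : ‖τ‖ = 1) :
    (muH μ).map (mob a τ) = muH (fun w => μ (mob (-(a * τ)) ((starRingEnd ℂ) τ) w)) := by
  have ha' := abs_inv_a ha hτ
  have hτ' : ‖(starRingEnd ℂ) τ‖ = 1 := by rwa [Complex.norm_conj]
  have hτ2 : normSq τ = 1 := by rw [← Complex.sq_norm, hτ]; norm_num
  ext t ht
  rw [Measure.map_apply (measurable_mob a τ) ht]
  rw [muH_apply μ ((measurable_mob a τ) ht), muH_apply _ ht]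
  set s : Set ℂ := (mob a τ ⁻¹' t) ∩ unitDisk with hs_def
  have hsm : MeasurableSet s := ((measurable_mob a τ) ht).inter measurableSet_unitDisk
  have himg : mob a τ '' s = t ∩ unitDisk := by
    apply Set.Subset.antisymm
    · rintro w ⟨z, ⟨hzt, hzD⟩, rfl⟩
      exact ⟨hzt, maps_disk ha hτ hzD⟩
    · rintro w ⟨hwt, hwD⟩
      refine ⟨mob (-(a * τ)) ((starRingEnd ℂ) τ) w, ⟨?_, maps_disk ha' hτ' hwD⟩,
        right_inv ha hτ hwD⟩
      show mob a τ _ ∈ t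
      rw [right_inv ha hτ hwD]; exact hwt
  have hderiv : ∀ z ∈ s, HasFDerivWithinAt (mob a τ)
      ((((1 : ℂ →L[ℂ] ℂ).smulRight
        (τ * (1 - (starRingEnd ℂ) a * a) / (1 - (starRingEnd ℂ) a * z) ^ 2)).restrictScalars ℝ))
      s z :=
    fun z hz =>
      (((hasDerivAt_mob a τ (denom_ne ha hz.2)).hasFDerivAt).restrictScalars ℝ).hasFDerivWithinAt
  have hinj : Set.InjOn (mob a τ) s := (injOn_mob ha hτ).mono Set.inter_subset_right
  rw [← himg, lintegral_image_eq_lintegral_abs_det_fderiv_mul volume hsm hderiv hinj]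
  apply lintegral_congr_ae
  refine (ae_restrict_iff' hsm).mpr (ae_of_all _ fun z hz => ?_)
  have hzD : ‖z‖ < 1 := hz.2
  have hd := denom_ne ha hzD
  dsimp only
  rw [det_mul_c, left_inv ha hτ hzD, _root_.abs_of_nonneg (normSq_nonneg _), ← mul_assoc]
  congr 1
  rw [← ENNReal.ofReal_mul (normSq_nonneg _)]
  congr 1
  have hns : normSq (τ * (1 - (starRingEnd ℂ) a * a) / (1 - (starRingEnd ℂ) a * z) ^ 2)
      = (1 - normSq a) ^ 2 / (normSq (1 - (starRingEnd ℂ) a * z)) ^ 2 := by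
    rw [map_div₀, map_mul, map_pow]
    rw [show (1 : ℂ) - (starRingEnd ℂ) a * a = ((1 - normSq a : ℝ) : ℂ) by
      rw [mul_comm, Complex.mul_conj]; push_cast; ring]
    rw [Complex.normSq_ofReal, hτ2]
    ring
  have hA : 0 < 1 - normSq a := by linarith [normSq_lt_one ha]
  have hZ : 0 < 1 - normSq z := by linarith [normSq_lt_one hzD]
  have hD : 0 < normSq (1 - (starRingEnd ℂ) a * z) := Complex.normSq_pos.mpr hd
  rw [hns, one_sub_sq ha hτ hzD, Complex.sq_norm]
  exact (density_identity hA hZ hD).symm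


lemma continuousOn_mob {a τ : ℂ} (ha : ‖a‖ < 1) :
    ContinuousOn (mob a τ) unitDisk := by
  intro z hz
  have hz' : ‖z‖ < 1 := hz
  apply ContinuousAt.continuousWithinAt
  apply ContinuousAt.div
  · fun_prop
  · fun_prop
  · exact denom_ne ha hz'

end MobiusAux

theorem TRd_pushforward_zero (μ : ℂ → ℝ)
    (hμc : ContinuousOn μ unitDisk) (hμ0 : ∀ z ∈ unitDisk, 0 ≤ μ z)
    (hμ1 : ∫⁻ z in unitDisk, ENNReal.ofReal (μ z) ∂volH = 1)
    (R : ℝ) (hR : 0 < R)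
    (m minv : ℂ → ℂ) (hm : IsDiskMobius m)
    (hinv₁ : ∀ z ∈ unitDisk, minv (m z) = z)
    (hinv₂ : ∀ w ∈ unitDisk, m (minv w) = w) :
    ContinuousOn (μ ∘ minv) unitDisk ∧ (∀ w ∈ unitDisk, 0 ≤ (μ ∘ minv) w) ∧
    (∫⁻ w in unitDisk, ENNReal.ofReal ((μ ∘ minv) w) ∂volH = 1) ∧
    TRd R μ (μ ∘ minv) = 0 := by
  open MobiusAux in
  obtain ⟨a, τ, ha, hτ, hmf⟩ := hm
  have hmeq : m = MobiusAux.mob a τ := funext hmf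
  have ha' : ‖-(a * τ)‖ < 1 := MobiusAux.abs_inv_a ha hτ
  have hτ' : ‖(starRingEnd ℂ) τ‖ = 1 := by rwa [Complex.norm_conj]
  set minv' : ℂ → ℂ := MobiusAux.mob (-(a * τ)) ((starRingEnd ℂ) τ) with hminv'def
  have hminv_eq : ∀ w ∈ unitDisk, minv w = minv' w := by
    intro w hw
    have hw' : ‖w‖ < 1 := hw
    have h1 : minv' w ∈ unitDisk := MobiusAux.maps_disk ha' hτ' hw'
    have h2 := hinv₁ _ h1
    rw [hmeq] at h2
    rw [MobiusAux.right_inv ha hτ hw'] at h2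
    exact h2
  have hmapsD : Set.MapsTo minv' unitDisk unitDisk :=
    fun w hw => MobiusAux.maps_disk ha' hτ' hw
  have hcont : ContinuousOn (μ ∘ minv) unitDisk := by
    refine (hμc.comp (MobiusAux.continuousOn_mob ha') hmapsD).congr ?_
    intro w hw
    simp only [Function.comp_apply]
    rw [hminv_eq w hw]
  have hnn : ∀ w ∈ unitDisk, 0 ≤ (μ ∘ minv) w := by
    intro w hw
    simp only [Function.comp_apply]
    rw [hminv_eq w hw]
    exact hμ0 _ (hmapsD hw)
  have hmeasm : Measurable m := by rw [hmeq]; exact MobiusAux.measurable_mob a τ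
  have hνcongr : muH (μ ∘ minv) = muH (fun w => μ (minv' w)) := by
    unfold muH
    apply withDensity_congr_ae
    filter_upwards [ae_restrict_mem MobiusAux.measurableSet_unitDisk] with z hz
    rw [Function.comp_apply, hminv_eq z hz]
  have hmap : (muH μ).map m = muH (fun w => μ (minv' w)) := by
    rw [hmeq]
    exact MobiusAux.map_mob_muH μ ha hτ
  have hμ_univ : ∀ f : ℂ → ℝ,
      muH f Set.univ = ∫⁻ z in unitDisk, ENNReal.ofReal (f z) ∂volH := by
    intro f
    rw [muH, withDensity_apply _ MeasurableSet.univ, Measure.restrict_univ]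
  have hint : ∫⁻ w in unitDisk, ENNReal.ofReal ((μ ∘ minv) w) ∂volH = 1 := by
    rw [← hμ_univ (μ ∘ minv)]
    calc muH (μ ∘ minv) Set.univ
        = muH (fun w => μ (minv' w)) Set.univ := by rw [hνcongr]
      _ = ((muH μ).map m) Set.univ := by rw [hmap]
      _ = muH μ Set.univ := by
          rw [Measure.map_apply hmeasm MeasurableSet.univ, Set.preimage_univ]
      _ = 1 := by rw [hμ_univ μ]; exact hμ1
  refine ⟨hcont, hnn, hint, ?_⟩
  have hmgm : Measurable fun z : ℂ => (z, m z) := measurable_id.prodMk hmeasm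
  set π₀ : Measure (ℂ × ℂ) := (muH μ).map (fun z => (z, m z)) with hπ₀def
  have h1 : π₀.map Prod.fst = muH μ := by
    rw [hπ₀def, Measure.map_map measurable_fst hmgm]
    have he : (Prod.fst ∘ fun z : ℂ => (z, m z)) = id := rfl
    rw [he, Measure.map_id]
  have h2 : π₀.map Prod.snd = muH (μ ∘ minv) := by
    rw [hπ₀def, Measure.map_map measurable_snd hmgm]
    have he : (Prod.snd ∘ fun z : ℂ => (z, m z)) = m := rfl
    rw [he, hmap]
    exact hνcongr.symm
  have hhypm : ∀ z : ℂ, MeasurableSet (hypDisk z R) := by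
    intro z
    have he : hypDisk z R = {w : ℂ | ‖w‖ < 1} ∩
        {w : ℂ | ‖(w - z) / (1 - (starRingEnd ℂ) z * w)‖ < Real.tanh R} := rfl
    rw [he]
    refine ((isOpen_lt continuous_norm continuous_const).measurableSet).inter
      (measurableSet_lt ?_ measurable_const)
    exact continuous_norm.measurable.comp
      ((measurable_id.sub measurable_const).div
        (measurable_const.sub (measurable_const.mul measurable_id)))
  have hdR0 : ∀ z : ℂ, dR R μ (μ ∘ minv) z (m z) = 0 := by
    intro z
    refine le_antisymm ?_ zero_le
    have hle : dR R μ (μ ∘ minv) z (m z)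
        ≤ ∫⁻ w in hypDisk z R, ENNReal.ofReal |μ w - (μ ∘ minv) (m w)| ∂volH :=
      iInf_le _ (⟨m, ⟨a, τ, ha, hτ, hmf⟩, rfl⟩ :
        {mm : ℂ → ℂ // IsDiskMobius mm ∧ mm z = m z})
    refine le_trans hle (le_of_eq ?_)
    have h0 : ∫⁻ w in hypDisk z R, ENNReal.ofReal |μ w - (μ ∘ minv) (m w)| ∂volH
        = ∫⁻ _w in hypDisk z R, 0 ∂volH := by
      apply lintegral_congr_ae
      refine (ae_restrict_iff' (hhypm z)).mpr (ae_of_all _ fun w hw => ?_)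
      have hwD : w ∈ unitDisk := hw.1
      have hvm : (μ ∘ minv) (m w) = μ w := by
        simp only [Function.comp_apply]
        rw [hinv₁ w hwD]
      dsimp only
      rw [hvm]
      simp
    rw [h0, lintegral_zero]
  refine le_antisymm ?_ zero_le
  calc TRd R μ (μ ∘ minv) ≤ ∫⁻ p, dR R μ (μ ∘ minv) p.1 p.2 ∂π₀ :=
        iInf_le _ (⟨π₀, h1, h2⟩ : {π : Measure (ℂ × ℂ) //
          π.map Prod.fst = muH μ ∧ π.map Prod.snd = muH (μ ∘ minv)})
    _ ≤ ∫⁻ z, dR R μ (μ ∘ minv) z (m z) ∂(muH μ) := by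
        rw [hπ₀def]
        exact lintegral_map_le _ _
    _ = 0 := by simp only [hdR0]; exact lintegral_zero

end
end

section
/- Let μ, ν : 𝔻 → ℝ be Lipschitz continuous with respect to the Euclidean metric, with Lipschitz constants C_μ and C_ν respectively, and let R > 0 with r_R = tanh R. Let z_i, w_j ∈ 𝔻, let m̃ be a disk Möbius transformation with m̃(0) = z_i, let h > 0, and let Δ₁, …, Δ_K be pairwise disjoint Borel subsets of 𝔻 with ⋃_k Δ_k = Ω_{0,R} and points p_k ∈ Δ_k satisfying Δ_k ⊆ {z : |z − p_k| ≤ h} for each k; set α_k = ∫_{Δ_k} 1 dvol_H. Then | d^R_{μ,ν}(z_i, w_j) − inf over disk Möbius m with m(z_i) = w_j of Σ_{k=1}^K α_k · |μ(m̃(p_k)) − ν(m(m̃(p_k)))| | ≤ (C_μ + C_ν) · (∫_{Ω_{0,R}} 1 dvol_H) · (1 − r_R)⁻² · h. -/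
open Complex MeasureTheory ENNReal

noncomputable section

def blaschke (a τ z : ℂ) : ℂ := τ * (z - a) / (1 - (starRingEnd ℂ) a * z)

namespace BK
variable {a τ : ℂ}

lemma key_normSq (a z : ℂ) :
    normSq (1 - (starRingEnd ℂ) a * z) = normSq (z - a) + (1 - normSq a) * (1 - normSq z) := by
  simp [Complex.normSq_apply, Complex.sub_re, Complex.sub_im, Complex.mul_re, Complex.mul_im]
  ring

lemma denom_ne (ha : ‖a‖ < 1) {z : ℂ} (hz : ‖z‖ < 1) :
    (1 : ℂ) - (starRingEnd ℂ) a * z ≠ 0 := by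
  intro h
  have h2 : ‖(starRingEnd ℂ) a * z‖ < 1 := by
    rw [norm_mul, Complex.norm_conj]
    nlinarith [norm_nonneg a, norm_nonneg z]
  have h3 : (starRingEnd ℂ) a * z = 1 := by linear_combination -h
  rw [h3] at h2; simp at h2

lemma one_sub_normSq_pos {z : ℂ} (hz : ‖z‖ < 1) : 0 < 1 - normSq z := by
  have : normSq z < 1 := by rw [← Complex.sq_norm]; nlinarith [norm_nonneg z]
  linarith

lemma normSq_denom_pos (ha : ‖a‖ < 1) {z : ℂ} (hz : ‖z‖ < 1) :
    0 < normSq (1 - (starRingEnd ℂ) a * z) :=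
  normSq_pos.2 (denom_ne ha hz)

/-- `1 - |m z|² = (1-|a|²)(1-|z|²)/|1-āz|²`. -/
lemma one_sub_normSq_blaschke (ha : ‖a‖ < 1) (hτ : ‖τ‖ = 1)
    {z : ℂ} (hz : ‖z‖ < 1) :
    1 - normSq (blaschke a τ z)
      = (1 - normSq a) * (1 - normSq z) / normSq (1 - (starRingEnd ℂ) a * z) := by
  have hτ2 : normSq τ = 1 := by rw [← Complex.sq_norm, hτ]; norm_num
  have hd := normSq_denom_pos ha hz
  rw [blaschke, Complex.normSq_div, Complex.normSq_mul, hτ2, one_mul]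
  rw [eq_div_iff hd.ne', sub_mul, div_mul_cancel₀ _ hd.ne']
  linear_combination key_normSq a z

lemma blaschke_mem_disk (ha : ‖a‖ < 1) (hτ : ‖τ‖ = 1)
    {z : ℂ} (hz : ‖z‖ < 1) : ‖blaschke a τ z‖ < 1 := by
  have h := one_sub_normSq_blaschke ha hτ hz
  have hd := normSq_denom_pos ha hz
  have ha' := one_sub_normSq_pos ha
  have hz' := one_sub_normSq_pos hz
  have : 0 < 1 - normSq (blaschke a τ z) := by rw [h]; positivity
  have : normSq (blaschke a τ z) < 1 := by linarith
  rw [← Complex.sq_norm] at this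
  nlinarith [norm_nonneg (blaschke a τ z)]

/-- difference identity -/
lemma blaschke_sub (ha : ‖a‖ < 1) {u v : ℂ}
    (hu : ‖u‖ < 1) (hv : ‖v‖ < 1) :
    blaschke a τ u - blaschke a τ v
      = τ * ((1 - normSq a : ℝ) : ℂ) * (u - v) /
        ((1 - (starRingEnd ℂ) a * u) * (1 - (starRingEnd ℂ) a * v)) := by
  have h1 := denom_ne ha hu
  have h2 := denom_ne ha hv
  rw [blaschke, blaschke]
  have hns : ((normSq a : ℝ) : ℂ) = (starRingEnd ℂ) a * a := by
    rw [mul_comm, Complex.mul_conj]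
  rw [div_sub_div _ _ h1 h2]
  congr 1
  push_cast
  linear_combination (τ * u - τ * v) * hns

end BK

namespace BK2
open BK
variable {a τ : ℂ}

/-- invariance of `|u-v|²/((1-|u|²)(1-|v|²))`. -/
lemma g_inv (ha : ‖a‖ < 1) (hτ : ‖τ‖ = 1) {u v : ℂ}
    (hu : ‖u‖ < 1) (hv : ‖v‖ < 1) :
    normSq (blaschke a τ u - blaschke a τ v)
        / ((1 - normSq (blaschke a τ u)) * (1 - normSq (blaschke a τ v)))
      = normSq (u - v) / ((1 - normSq u) * (1 - normSq v)) := by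
  have hτ2 : normSq τ = 1 := by rw [← Complex.sq_norm, hτ]; norm_num
  have hdu := normSq_denom_pos ha hu
  have hdv := normSq_denom_pos ha hv
  have ha' := one_sub_normSq_pos ha
  have hu' := one_sub_normSq_pos hu
  have hv' := one_sub_normSq_pos hv
  rw [blaschke_sub ha hu hv, one_sub_normSq_blaschke ha hτ hu,
    one_sub_normSq_blaschke ha hτ hv, Complex.normSq_div, Complex.normSq_mul,
    Complex.normSq_mul, hτ2, Complex.normSq_mul, Complex.normSq_ofReal]
  field_simp
  ring_nf
  have e1 : normSq (1 - u * (starRingEnd ℂ) a) ≠ 0 := by rw [mul_comm]; exact hdu.ne'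
  have e2 : normSq (1 - v * (starRingEnd ℂ) a) ≠ 0 := by rw [mul_comm]; exact hdv.ne'
  field_simp

lemma normSq_sub_le_g (ha : ‖a‖ < 1) (hτ : ‖τ‖ = 1) {u v : ℂ}
    (hu : ‖u‖ < 1) (hv : ‖v‖ < 1) :
    normSq (blaschke a τ u - blaschke a τ v)
      ≤ normSq (u - v) / ((1 - normSq u) * (1 - normSq v)) := by
  rw [← g_inv ha hτ hu hv]
  have h1 := one_sub_normSq_pos (blaschke_mem_disk ha hτ hu)
  have h2 := one_sub_normSq_pos (blaschke_mem_disk ha hτ hv)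
  have h3 : normSq (blaschke a τ u) ≤ 1 := by nlinarith
  have h4 : normSq (blaschke a τ v) ≤ 1 := by nlinarith
  have h5 : (1 - normSq (blaschke a τ u)) * (1 - normSq (blaschke a τ v)) ≤ 1 := by
    nlinarith [normSq_nonneg (blaschke a τ u), normSq_nonneg (blaschke a τ v)]
  have h6 : 0 < (1 - normSq (blaschke a τ u)) * (1 - normSq (blaschke a τ v)) := by positivity
  calc normSq (blaschke a τ u - blaschke a τ v)
      = normSq (blaschke a τ u - blaschke a τ v) / 1 := by ring
    _ ≤ normSq (blaschke a τ u - blaschke a τ v)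
        / ((1 - normSq (blaschke a τ u)) * (1 - normSq (blaschke a τ v))) := by
        apply div_le_div_of_nonneg_left (normSq_nonneg _) h6 h5

/-- From a bound `normSq X ≤ normSq(u-v)/((1-nsu)(1-nsv))` with `|u|,|v| ≤ r < 1`,
get the euclidean bound. -/
lemma abs_le_of_normSq_le {X : ℂ} {u v : ℂ} {r : ℝ} (hr0 : 0 ≤ r) (hr1 : r < 1)
    (hu : ‖u‖ ≤ r) (hv : ‖v‖ ≤ r)
    (hX : normSq X ≤ normSq (u - v) / ((1 - normSq u) * (1 - normSq v))) :
    ‖X‖ ≤ ((1 - r) ^ 2)⁻¹ * ‖u - v‖ := by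
  have hru : normSq u ≤ r ^ 2 := by
    rw [← Complex.sq_norm]; exact pow_le_pow_left₀ (norm_nonneg u) hu 2
  have hrv : normSq v ≤ r ^ 2 := by
    rw [← Complex.sq_norm]; exact pow_le_pow_left₀ (norm_nonneg v) hv 2
  have h1 : 0 < 1 - r ^ 2 := by nlinarith
  have hu' : 0 < 1 - normSq u := by nlinarith
  have hv' : 0 < 1 - normSq v := by nlinarith
  have h2 : normSq X ≤ normSq (u - v) * ((1 - r ^ 2)⁻¹) ^ 2 := by
    calc normSq X ≤ normSq (u - v) / ((1 - normSq u) * (1 - normSq v)) := hX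
      _ ≤ normSq (u - v) / ((1 - r ^ 2) * (1 - r ^ 2)) := by
          apply div_le_div_of_nonneg_left (normSq_nonneg _) (by nlinarith) (by nlinarith)
      _ = normSq (u - v) * ((1 - r ^ 2)⁻¹) ^ 2 := by rw [div_eq_mul_inv, mul_inv]; ring
  have h3 : ‖X‖ ≤ ‖u - v‖ * (1 - r ^ 2)⁻¹ := by
    have := Real.sqrt_le_sqrt h2
    rwa [← Complex.norm_def, Real.sqrt_mul (normSq_nonneg _), ← Complex.norm_def,
      Real.sqrt_sq (by positivity)] at this
  have h4 : (1 - r ^ 2)⁻¹ ≤ ((1 - r) ^ 2)⁻¹ := by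
    have hq : (0:ℝ) < (1 - r) ^ 2 := pow_pos (by linarith) 2
    apply inv_anti₀ hq
    nlinarith
  calc ‖X‖ ≤ ‖u - v‖ * (1 - r ^ 2)⁻¹ := h3
    _ ≤ ‖u - v‖ * ((1 - r) ^ 2)⁻¹ := by
        apply mul_le_mul_of_nonneg_left h4 (norm_nonneg _)
    _ = ((1 - r) ^ 2)⁻¹ * ‖u - v‖ := mul_comm _ _

end BK2

namespace BK3
open BK BK2
variable {a τ : ℂ}

lemma tau_mul_conj (hτ : ‖τ‖ = 1) : τ * (starRingEnd ℂ) τ = 1 := by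
  rw [Complex.mul_conj]
  norm_cast
  rw [← Complex.sq_norm, hτ]; norm_num

/-- left inverse -/
lemma blaschke_inv (ha : ‖a‖ < 1) (hτ : ‖τ‖ = 1) {z : ℂ}
    (hz : ‖z‖ < 1) :
    blaschke (-τ * a) ((starRingEnd ℂ) τ) (blaschke a τ z) = z := by
  have hd := denom_ne ha hz
  have hττ := tau_mul_conj hτ
  have hτne : τ ≠ 0 := by
    intro h; rw [h] at hτ; simp at hτ
  have hcτ : (starRingEnd ℂ) τ = τ⁻¹ := eq_inv_of_mul_eq_one_left (by linear_combination hττ)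
  have hz' := blaschke_mem_disk ha hτ hz
  have ha2 : ‖-τ * a‖ < 1 := by
    rw [show -τ * a = -(τ * a) by ring, norm_neg, norm_mul, hτ, one_mul]
    exact ha
  have hd2 := denom_ne ha2 hz'
  simp only [blaschke] at hd2 ⊢
  rw [div_eq_iff hd2]
  apply mul_right_cancel₀ hd
  have hq : τ * (z - a) / (1 - (starRingEnd ℂ) a * z) * (1 - (starRingEnd ℂ) a * z) = τ * (z - a) := div_mul_cancel₀ _ hd
  have hconj : (starRingEnd ℂ) (-τ * a) = -((starRingEnd ℂ) τ * (starRingEnd ℂ) a) := by rw [map_mul, map_neg]; ring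
  linear_combination ((starRingEnd ℂ) τ - z * (starRingEnd ℂ) τ * (starRingEnd ℂ) a) * hq + z * (1 - (starRingEnd ℂ) a * z) * hττ + z * (τ * (z - a) / (1 - (starRingEnd ℂ) a * z)) * (1 - (starRingEnd ℂ) a * z) * hconj
end BK3

namespace BK4
open BK BK2 BK3
variable {a τ : ℂ}

/-- ratio identity: `(m w - m 0)/(1 - conj (m 0) * m w) = τ * w`. -/
lemma ratio_id (ha : ‖a‖ < 1) (hτ : ‖τ‖ = 1) {w : ℂ}
    (hw : ‖w‖ < 1) :
    (blaschke a τ w - blaschke a τ 0) /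
      (1 - (starRingEnd ℂ) (blaschke a τ 0) * blaschke a τ w) = τ * w := by
  have hd := denom_ne ha hw
  have hττ := tau_mul_conj hτ
  have h0 : ‖(0:ℂ)‖ < 1 := by simp
  have hw' := blaschke_mem_disk ha hτ hw
  have h0' := blaschke_mem_disk ha hτ h0
  have hd2 : (1:ℂ) - (starRingEnd ℂ) (blaschke a τ 0) * blaschke a τ w ≠ 0 := by
    intro hcon
    have : ‖(starRingEnd ℂ) (blaschke a τ 0) * blaschke a τ w‖ < 1 := by
      rw [norm_mul, Complex.norm_conj]
      nlinarith [norm_nonneg (blaschke a τ 0), norm_nonneg (blaschke a τ w)]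
    have h3 : (starRingEnd ℂ) (blaschke a τ 0) * blaschke a τ w = 1 := by linear_combination -hcon
    rw [h3] at this; simp at this
  rw [div_eq_iff hd2]
  have hB0 : blaschke a τ 0 = -(τ * a) := by simp [blaschke]
  have hcB0 : (starRingEnd ℂ) (blaschke a τ 0) = -((starRingEnd ℂ) τ * (starRingEnd ℂ) a) := by
    rw [hB0, map_neg, map_mul]
  rw [hcB0, hB0]
  simp only [blaschke]
  apply mul_right_cancel₀ hd
  have hq : τ * (w - a) / (1 - (starRingEnd ℂ) a * w) * (1 - (starRingEnd ℂ) a * w) = τ * (w - a) := div_mul_cancel₀ _ hd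
  linear_combination (1 - τ * w * (starRingEnd ℂ) τ * (starRingEnd ℂ) a) * hq + (-(τ * (starRingEnd ℂ) a * w * (w - a))) * hττ
end BK4

namespace BK5
open BK BK2 BK3 BK4
variable {a τ : ℂ}

def bderiv (a τ z : ℂ) : ℂ := τ * (1 - (starRingEnd ℂ) a * a) / (1 - (starRingEnd ℂ) a * z) ^ 2

lemma hasDerivAt_blaschke (ha : ‖a‖ < 1) {z : ℂ} (hz : ‖z‖ < 1) :
    HasDerivAt (blaschke a τ) (bderiv a τ z) z := by
  have hd := denom_ne ha hz
  have h1 : HasDerivAt (fun z : ℂ => τ * (z - a)) τ z := by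
    simpa using ((hasDerivAt_id z).sub_const a).const_mul τ
  have h2 : HasDerivAt (fun z : ℂ => 1 - (starRingEnd ℂ) a * z) (-(starRingEnd ℂ) a) z := by
    simpa using ((hasDerivAt_id z).const_mul ((starRingEnd ℂ) a)).const_sub 1
  have h3 := h1.div h2 hd
  have e : bderiv a τ z = (τ * (1 - (starRingEnd ℂ) a * z) - τ * (z - a) * -(starRingEnd ℂ) a) / (1 - (starRingEnd ℂ) a * z) ^ 2 := by
    rw [bderiv]; ring
  rw [e]; exact h3

lemma det_eq_normSq (c : ℂ) :
    (((1 : ℂ →L[ℂ] ℂ).smulRight c).restrictScalars ℝ).det = normSq c := by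
  have h : (((1 : ℂ →L[ℂ] ℂ).smulRight c).restrictScalars ℝ).toLinearMap
      = (Algebra.lmul ℝ ℂ) c := by
    apply LinearMap.ext
    intro z
    simp [mul_comm]
  rw [ContinuousLinearMap.det, h, ← Algebra.norm_apply, Algebra.norm_complex_apply]

/-- density transformation identity -/
lemma density_id (ha : ‖a‖ < 1) (hτ : ‖τ‖ = 1) {z : ℂ}
    (hz : ‖z‖ < 1) :
    normSq (bderiv a τ z) * ((1 - ‖blaschke a τ z‖ ^ 2) ^ 2)⁻¹
      = ((1 - ‖z‖ ^ 2) ^ 2)⁻¹ := by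
  have hτ2 : normSq τ = 1 := by rw [← Complex.sq_norm, hτ]; norm_num
  have hd := normSq_denom_pos ha hz
  have ha' := one_sub_normSq_pos ha
  have hz' := one_sub_normSq_pos hz
  have hb := one_sub_normSq_blaschke ha hτ hz
  rw [Complex.sq_norm, Complex.sq_norm, hb]
  have hns : normSq (bderiv a τ z) = (1 - normSq a) ^ 2 / normSq (1 - (starRingEnd ℂ) a * z) ^ 2 := by
    rw [bderiv, Complex.normSq_div, Complex.normSq_mul, hτ2, one_mul, map_pow]
    congr 1
    have : (1 : ℂ) - (starRingEnd ℂ) a * a = ((1 - normSq a : ℝ) : ℂ) := by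
      rw [mul_comm, Complex.mul_conj]; push_cast; ring
    rw [this, Complex.normSq_ofReal]; ring
  rw [hns]
  field_simp

end BK5

namespace BK6
open BK BK2 BK3 BK4 BK5
variable {a τ : ℂ} {R : ℝ}

lemma tanh_pos (hR : 0 < R) : 0 < Real.tanh R := by
  rw [Real.tanh_eq_sinh_div_cosh]
  exact div_pos (by rwa [Real.sinh_pos_iff]) (Real.cosh_pos R)

lemma tanh_lt_one (R : ℝ) : Real.tanh R < 1 := by
  rw [Real.tanh_eq_sinh_div_cosh]
  exact (div_lt_one (Real.cosh_pos R)).2 (Real.sinh_lt_cosh R)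

lemma hypDisk_zero (R : ℝ) : hypDisk 0 R = Metric.ball (0 : ℂ) (Real.tanh R) := by
  ext z
  simp only [hypDisk, Set.mem_setOf_eq, Metric.mem_ball, Complex.dist_eq, sub_zero, map_zero,
    zero_mul, sub_zero, div_one]
  constructor
  · rintro ⟨-, h⟩; exact h
  · intro hz; exact ⟨lt_trans hz (tanh_lt_one R), hz⟩

lemma mem_hypDisk_zero {z : ℂ} (h : ‖z‖ < Real.tanh R) : z ∈ hypDisk 0 R := by
  rw [hypDisk_zero]; simpa [Complex.dist_eq] using h

lemma abs_lt_of_mem {z : ℂ} (h : z ∈ hypDisk 0 R) : ‖z‖ < Real.tanh R := by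
  rw [hypDisk_zero] at h; simpa [Complex.dist_eq] using h

/-- image of the central hyperbolic disk -/
lemma image_hypDisk (ha : ‖a‖ < 1) (hτ : ‖τ‖ = 1) (R : ℝ) :
    blaschke a τ '' hypDisk 0 R = hypDisk (blaschke a τ 0) R := by
  have hττ := tau_mul_conj hτ
  ext z
  constructor
  · rintro ⟨w, hw, rfl⟩
    have hw1 : ‖w‖ < 1 := lt_trans (abs_lt_of_mem hw) (tanh_lt_one R)
    refine ⟨blaschke_mem_disk ha hτ hw1, ?_⟩
    rw [ratio_id ha hτ hw1, norm_mul, hτ, one_mul]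
    exact abs_lt_of_mem hw
  · rintro ⟨hz1, hz2⟩
    set w := blaschke (-τ * a) ((starRingEnd ℂ) τ) z with hwdef
    have ha2 : ‖-τ * a‖ < 1 := by
      rw [show -τ * a = -(τ * a) by ring, norm_neg, norm_mul, hτ,
        one_mul]
      exact ha
    have hτ2 : ‖(starRingEnd ℂ) τ‖ = 1 := by rwa [Complex.norm_conj]
    have hw1 : ‖w‖ < 1 := blaschke_mem_disk ha2 hτ2 hz1
    have hinv : blaschke a τ w = z := by
      have h := blaschke_inv ha2 hτ2 hz1
      have e1 : -(starRingEnd ℂ) τ * (-τ * a) = a := by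
        have : (starRingEnd ℂ) τ * τ = 1 := by linear_combination hττ
        linear_combination a * this
      have e2 : (starRingEnd ℂ) ((starRingEnd ℂ) τ) = τ := Complex.conj_conj τ
      rwa [e1, e2] at h
    refine ⟨w, ?_, hinv⟩
    apply mem_hypDisk_zero
    have hr : (blaschke a τ w - blaschke a τ 0) /
        (1 - (starRingEnd ℂ) (blaschke a τ 0) * blaschke a τ w) = τ * w := ratio_id ha hτ hw1
    rw [hinv] at hr
    calc ‖w‖ = ‖τ * w‖ := by rw [norm_mul, hτ, one_mul]
      _ = ‖(z - blaschke a τ 0) / (1 - (starRingEnd ℂ) (blaschke a τ 0) * z)‖ := by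
          rw [← hr]
      _ < Real.tanh R := hz2

lemma injOn_blaschke (ha : ‖a‖ < 1) (hτ : ‖τ‖ = 1) {s : Set ℂ}
    (hs : ∀ x ∈ s, ‖x‖ < 1) : Set.InjOn (blaschke a τ) s := by
  intro u hu v hv huv
  have h1 := blaschke_inv ha hτ (hs u hu)
  have h2 := blaschke_inv ha hτ (hs v hv)
  rw [← h1, ← h2, huv]

lemma measurable_density :
    Measurable (fun z : ℂ => ENNReal.ofReal (((1 - ‖z‖ ^ 2) ^ 2)⁻¹)) := by
  apply ENNReal.measurable_ofReal.comp
  apply Measurable.inv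
  have : Continuous fun z : ℂ => (1 - ‖z‖ ^ 2) ^ 2 := by
    have := (continuous_norm : Continuous fun z : ℂ => ‖z‖)
    continuity
  exact this.measurable

/-- Change of variables for `volH`-integrals under a Blaschke map, no measurability of `F`. -/
lemma change_of_var (ha : ‖a‖ < 1) (hτ : ‖τ‖ = 1) (R : ℝ)
    (F : ℂ → ℝ≥0∞) :
    ∫⁻ z in hypDisk (blaschke a τ 0) R, F z ∂volH
      = ∫⁻ w in hypDisk 0 R, F (blaschke a τ w) ∂volH := by
  set s := hypDisk 0 R with hsdef
  have hsm : MeasurableSet s := by rw [hsdef, hypDisk_zero]; exact measurableSet_ball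
  have hsub : ∀ x ∈ s, ‖x‖ < 1 := fun x hx =>
    lt_trans (abs_lt_of_mem hx) (tanh_lt_one R)
  set f' : ℂ → ℂ →L[ℝ] ℂ :=
    fun x => ((1 : ℂ →L[ℂ] ℂ).smulRight (bderiv a τ x)).restrictScalars ℝ with hf'def
  have hf' : ∀ x ∈ s, HasFDerivWithinAt (blaschke a τ) (f' x) s x := fun x hx =>
    (((hasDerivAt_blaschke ha (hsub x hx)).hasFDerivAt).restrictScalars ℝ).hasFDerivWithinAt
  have hinj : Set.InjOn (blaschke a τ) s := injOn_blaschke ha hτ hsub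
  have himg : blaschke a τ '' s = hypDisk (blaschke a τ 0) R := image_hypDisk ha hτ R
  have himgm : MeasurableSet (blaschke a τ '' s) :=
    measurable_image_of_fderivWithin hsm hf' hinj
  rw [← himg, volH]
  rw [setLIntegral_withDensity_eq_setLIntegral_mul_non_measurable _ measurable_density _ himgm
    (Filter.Eventually.of_forall fun x => ENNReal.ofReal_lt_top)]
  rw [setLIntegral_withDensity_eq_setLIntegral_mul_non_measurable _ measurable_density _ hsm
    (Filter.Eventually.of_forall fun x => ENNReal.ofReal_lt_top)]
  simp only [Pi.mul_apply]
  rw [lintegral_image_eq_lintegral_abs_det_fderiv_mul volume hsm hf' hinj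
    (fun z => ENNReal.ofReal (((1 - ‖z‖ ^ 2) ^ 2)⁻¹) * F z)]
  apply setLIntegral_congr_fun hsm
  intro x hx
  beta_reduce
  have hdet : (f' x).det = normSq (bderiv a τ x) := det_eq_normSq (bderiv a τ x)
  rw [hdet, _root_.abs_of_nonneg (normSq_nonneg _), ← mul_assoc,
    ← ENNReal.ofReal_mul (normSq_nonneg _), density_id ha hτ (hsub x hx)]

lemma volH_finite {r : ℝ} (hr1 : r < 1) : volH (Metric.ball (0:ℂ) r) < ⊤ := by
  rw [volH, MeasureTheory.withDensity_apply _ measurableSet_ball]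
  rcases le_or_gt r 0 with hr | hr
  · have : Metric.ball (0:ℂ) r = ∅ := Metric.ball_eq_empty.2 hr
    simp [this]
  · have hb : ∀ x ∈ Metric.ball (0:ℂ) r,
        ENNReal.ofReal (((1 - ‖x‖ ^ 2) ^ 2)⁻¹)
          ≤ ENNReal.ofReal (((1 - r ^ 2) ^ 2)⁻¹) := by
      intro x hx
      have hxr : ‖x‖ < r := by
        simpa [Complex.dist_eq] using (Metric.mem_ball.1 hx)
      apply ENNReal.ofReal_le_ofReal
      have h1 : 0 < 1 - r ^ 2 := by nlinarith
      have h2 : 1 - r ^ 2 ≤ 1 - ‖x‖ ^ 2 := by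
        nlinarith [norm_nonneg x]
      apply inv_anti₀ (by positivity)
      nlinarith
    calc ∫⁻ x in Metric.ball (0:ℂ) r, ENNReal.ofReal (((1 - ‖x‖ ^ 2) ^ 2)⁻¹) ∂volume
        ≤ ∫⁻ _ in Metric.ball (0:ℂ) r, ENNReal.ofReal (((1 - r ^ 2) ^ 2)⁻¹) ∂volume := by
          apply setLIntegral_mono' measurableSet_ball hb
      _ = ENNReal.ofReal (((1 - r ^ 2) ^ 2)⁻¹) * volume (Metric.ball (0:ℂ) r) :=
          setLIntegral_const _ _
      _ < ⊤ := ENNReal.mul_lt_top ENNReal.ofReal_lt_top measure_ball_lt_top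

end BK6

namespace BK7
open BK6

lemma quad_approx {R : ℝ} {K : ℕ} (Δ : Fin K → Set ℂ) (hΔmeas : ∀ k, MeasurableSet (Δ k))
    (hΔdisj : ∀ k l, k ≠ l → Disjoint (Δ k) (Δ l))
    (hΔcover : (⋃ k, Δ k) = hypDisk 0 R)
    (p : Fin K → ℂ) (hp : ∀ k, p k ∈ Δ k)
    (f : ℂ → ℝ) (ε : ℝ)
    (hf : ∀ k, ∀ z ∈ Δ k, |f z - f (p k)| ≤ ε) :
    (∫⁻ w in hypDisk 0 R, ENNReal.ofReal (f w) ∂volH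
        ≤ (∑ k, volH (Δ k) * ENNReal.ofReal (f (p k))) + volH (hypDisk 0 R) * ENNReal.ofReal ε)
    ∧ ((∑ k, volH (Δ k) * ENNReal.ofReal (f (p k)))
        ≤ (∫⁻ w in hypDisk 0 R, ENNReal.ofReal (f w) ∂volH) + volH (hypDisk 0 R) * ENNReal.ofReal ε) := by
  have hpw : Pairwise (Function.onFun Disjoint Δ) := fun k l hkl => hΔdisj k l hkl
  have hsplit : ∫⁻ w in hypDisk 0 R, ENNReal.ofReal (f w) ∂volH
      = ∑ k, ∫⁻ w in Δ k, ENNReal.ofReal (f w) ∂volH := by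
    rw [← hΔcover, lintegral_iUnion hΔmeas hpw, tsum_fintype]
  have hvol : volH (hypDisk 0 R) = ∑ k, volH (Δ k) := by
    rw [← hΔcover, measure_iUnion hpw hΔmeas, tsum_fintype]
  have hc1 : ∀ k, ∫⁻ w in Δ k, ENNReal.ofReal (f w) ∂volH
      ≤ volH (Δ k) * ENNReal.ofReal (f (p k)) + volH (Δ k) * ENNReal.ofReal ε := by
    intro k
    have hb : ∫⁻ w in Δ k, ENNReal.ofReal (f w) ∂volH
        ≤ ∫⁻ _ in Δ k, ENNReal.ofReal (f (p k) + ε) ∂volH := by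
      apply lintegral_mono_ae
      rw [ae_restrict_iff' (hΔmeas k)]
      apply Filter.Eventually.of_forall
      intro z hz
      apply ENNReal.ofReal_le_ofReal
      have := hf k z hz
      have := abs_le.1 this
      linarith [this.2]
    calc ∫⁻ w in Δ k, ENNReal.ofReal (f w) ∂volH
        ≤ ∫⁻ _ in Δ k, ENNReal.ofReal (f (p k) + ε) ∂volH := hb
      _ = ENNReal.ofReal (f (p k) + ε) * volH (Δ k) := setLIntegral_const _ _
      _ ≤ (ENNReal.ofReal (f (p k)) + ENNReal.ofReal ε) * volH (Δ k) := by
          exact mul_le_mul_left ENNReal.ofReal_add_le _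
      _ = volH (Δ k) * ENNReal.ofReal (f (p k)) + volH (Δ k) * ENNReal.ofReal ε := by
          ring
  have hc2 : ∀ k, volH (Δ k) * ENNReal.ofReal (f (p k))
      ≤ (∫⁻ w in Δ k, ENNReal.ofReal (f w) ∂volH) + volH (Δ k) * ENNReal.ofReal ε := by
    intro k
    have hb : ∫⁻ _ in Δ k, ENNReal.ofReal (f (p k)) ∂volH
        ≤ ∫⁻ w in Δ k, (ENNReal.ofReal (f w) + ENNReal.ofReal ε) ∂volH := by
      apply lintegral_mono_ae
      rw [ae_restrict_iff' (hΔmeas k)]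
      apply Filter.Eventually.of_forall
      intro z hz
      calc ENNReal.ofReal (f (p k)) ≤ ENNReal.ofReal (f z + ε) := by
            apply ENNReal.ofReal_le_ofReal
            have := abs_le.1 (hf k z hz)
            linarith [this.1]
        _ ≤ ENNReal.ofReal (f z) + ENNReal.ofReal ε := ENNReal.ofReal_add_le
    calc volH (Δ k) * ENNReal.ofReal (f (p k))
        = ∫⁻ _ in Δ k, ENNReal.ofReal (f (p k)) ∂volH := by rw [setLIntegral_const, mul_comm]
      _ ≤ ∫⁻ w in Δ k, (ENNReal.ofReal (f w) + ENNReal.ofReal ε) ∂volH := hb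
      _ = (∫⁻ w in Δ k, ENNReal.ofReal (f w) ∂volH) + ENNReal.ofReal ε * volH (Δ k) := by
          rw [lintegral_add_right _ measurable_const, setLIntegral_const]
      _ = (∫⁻ w in Δ k, ENNReal.ofReal (f w) ∂volH) + volH (Δ k) * ENNReal.ofReal ε := by
          rw [mul_comm (ENNReal.ofReal ε)]
  constructor
  · rw [hsplit, hvol, Finset.sum_mul]
    rw [← Finset.sum_add_distrib]
    exact Finset.sum_le_sum fun k _ => hc1 k
  · rw [hsplit, hvol, Finset.sum_mul, ← Finset.sum_add_distrib]
    exact Finset.sum_le_sum fun k _ => hc2 k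

end BK7

section Main
open BK BK2 BK3 BK4 BK5 BK6 BK7

theorem quadrature_error_bound (μ ν : ℂ → ℝ) (Cμ Cν : ℝ)
    (hμL : ∀ z ∈ unitDisk, ∀ w ∈ unitDisk, |μ z - μ w| ≤ Cμ * ‖z - w‖)
    (hνL : ∀ z ∈ unitDisk, ∀ w ∈ unitDisk, |ν z - ν w| ≤ Cν * ‖z - w‖)
    (R : ℝ) (hR : 0 < R)
    (zi wj : ℂ) (hzi : zi ∈ unitDisk) (hwj : wj ∈ unitDisk)
    (mt : ℂ → ℂ) (hmt : IsDiskMobius mt) (hmt0 : mt 0 = zi)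
    (h : ℝ) (hh : 0 < h) (K : ℕ)
    (Δ : Fin K → Set ℂ) (hΔmeas : ∀ k, MeasurableSet (Δ k))
    (hΔdisj : ∀ k l, k ≠ l → Disjoint (Δ k) (Δ l))
    (hΔcover : (⋃ k, Δ k) = hypDisk 0 R)
    (p : Fin K → ℂ) (hp : ∀ k, p k ∈ Δ k)
    (hfine : ∀ k, Δ k ⊆ {z : ℂ | ‖z - p k‖ ≤ h}) :
    (dR R μ ν zi wj ≤
        (⨅ m : {m : ℂ → ℂ // IsDiskMobius m ∧ m zi = wj},
          ∑ k, volH (Δ k) * ENNReal.ofReal |μ (mt (p k)) - ν (m.1 (mt (p k)))|)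
      + ENNReal.ofReal ((Cμ + Cν) * (volH (hypDisk 0 R)).toReal
          * ((1 - Real.tanh R) ^ 2)⁻¹ * h)) ∧
    ((⨅ m : {m : ℂ → ℂ // IsDiskMobius m ∧ m zi = wj},
          ∑ k, volH (Δ k) * ENNReal.ofReal |μ (mt (p k)) - ν (m.1 (mt (p k)))|)
      ≤ dR R μ ν zi wj
      + ENNReal.ofReal ((Cμ + Cν) * (volH (hypDisk 0 R)).toReal
          * ((1 - Real.tanh R) ^ 2)⁻¹ * h)) := by
  obtain ⟨a, τ, ha, hτ, hmteq⟩ := hmt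
  have hmtf : mt = blaschke a τ := funext fun z => hmteq z
  subst hmtf
  have hzi0 : blaschke a τ 0 = zi := hmt0
  have hr0 : 0 < Real.tanh R := tanh_pos hR
  have hr1 : Real.tanh R < 1 := tanh_lt_one R
  -- nonnegativity of the Lipschitz constants
  have h0mem : (0:ℂ) ∈ unitDisk := by simp [unitDisk]
  have hhalf : (1/2 : ℂ) ∈ unitDisk := by
    simp only [unitDisk, Set.mem_setOf_eq, norm_div, norm_one, Complex.norm_two]
    norm_num
  have habs : ‖(0:ℂ) - 1/2‖ = 1/2 := by
    rw [zero_sub, norm_neg, norm_div, norm_one, Complex.norm_two]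
  have hCμ : 0 ≤ Cμ := by
    have := hμL 0 h0mem (1/2) hhalf
    rw [habs] at this
    nlinarith [abs_nonneg (μ 0 - μ (1/2))]
  have hCν : 0 ≤ Cν := by
    have := hνL 0 h0mem (1/2) hhalf
    rw [habs] at this
    nlinarith [abs_nonneg (ν 0 - ν (1/2))]
  set r := Real.tanh R with hrdef
  set ε := (Cμ + Cν) * ((1 - r) ^ 2)⁻¹ * h with hεdef
  have hinv0 : (0:ℝ) ≤ ((1 - r) ^ 2)⁻¹ := by positivity
  have hε0 : 0 ≤ ε := by positivity
  have hVfin : volH (hypDisk 0 R) ≠ ⊤ := by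
    rw [hypDisk_zero]; exact (volH_finite hr1).ne
  set E := volH (hypDisk 0 R) * ENNReal.ofReal ε with hEdef
  have hE : E = ENNReal.ofReal ((Cμ + Cν) * (volH (hypDisk 0 R)).toReal
      * ((1 - r) ^ 2)⁻¹ * h) := by
    rw [hEdef]
    nth_rewrite 1 [← ENNReal.ofReal_toReal hVfin]
    rw [← ENNReal.ofReal_mul ENNReal.toReal_nonneg]
    congr 1
    rw [hεdef]; ring
  -- key pointwise (in m) comparison
  have key : ∀ m : {m : ℂ → ℂ // IsDiskMobius m ∧ m zi = wj},
      ((∫⁻ z in hypDisk zi R, ENNReal.ofReal |μ z - ν (m.1 z)| ∂volH)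
        ≤ (∑ k, volH (Δ k) * ENNReal.ofReal |μ (blaschke a τ (p k)) - ν (m.1 (blaschke a τ (p k)))|) + E)
      ∧ ((∑ k, volH (Δ k) * ENNReal.ofReal |μ (blaschke a τ (p k)) - ν (m.1 (blaschke a τ (p k)))|)
        ≤ (∫⁻ z in hypDisk zi R, ENNReal.ofReal |μ z - ν (m.1 z)| ∂volH) + E) := by
    intro m
    obtain ⟨⟨a', τ', ha', hτ', hm'eq⟩, hmzw⟩ := m.2
    have hm'f : m.1 = blaschke a' τ' := funext fun z => hm'eq z
    have hcv : (∫⁻ z in hypDisk zi R, ENNReal.ofReal |μ z - ν (m.1 z)| ∂volH)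
        = ∫⁻ w in hypDisk 0 R,
            ENNReal.ofReal |μ (blaschke a τ w) - ν (m.1 (blaschke a τ w))| ∂volH := by
      have := change_of_var ha hτ R (fun z => ENNReal.ofReal |μ z - ν (m.1 z)|)
      rwa [hzi0] at this
    set f : ℂ → ℝ := fun w => |μ (blaschke a τ w) - ν (m.1 (blaschke a τ w))| with hfdef
    have hf : ∀ k, ∀ z ∈ Δ k, |f z - f (p k)| ≤ ε := by
      intro k z hz
      have hzΩ : z ∈ hypDisk 0 R := hΔcover ▸ Set.mem_iUnion.2 ⟨k, hz⟩
      have hpΩ : p k ∈ hypDisk 0 R := hΔcover ▸ Set.mem_iUnion.2 ⟨k, hp k⟩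
      have hzr : ‖z‖ < r := abs_lt_of_mem hzΩ
      have hpr : ‖p k‖ < r := abs_lt_of_mem hpΩ
      have hz1 : ‖z‖ < 1 := lt_trans hzr hr1
      have hp1 : ‖p k‖ < 1 := lt_trans hpr hr1
      have hu1 : ‖blaschke a τ z‖ < 1 := blaschke_mem_disk ha hτ hz1
      have hv1 : ‖blaschke a τ (p k)‖ < 1 := blaschke_mem_disk ha hτ hp1
      have hzp : ‖z - p k‖ ≤ h := hfine k hz
      -- bound for the inner map
      have b1 : ‖blaschke a τ z - blaschke a τ (p k)‖
          ≤ ((1 - r) ^ 2)⁻¹ * ‖z - p k‖ :=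
        abs_le_of_normSq_le hr0.le hr1 hzr.le hpr.le (normSq_sub_le_g ha hτ hz1 hp1)
      -- bound for the composition
      have b2 : ‖m.1 (blaschke a τ z) - m.1 (blaschke a τ (p k))‖
          ≤ ((1 - r) ^ 2)⁻¹ * ‖z - p k‖ := by
        apply abs_le_of_normSq_le hr0.le hr1 hzr.le hpr.le
        rw [hm'f]
        calc normSq (blaschke a' τ' (blaschke a τ z) - blaschke a' τ' (blaschke a τ (p k)))
            ≤ normSq (blaschke a τ z - blaschke a τ (p k))
              / ((1 - normSq (blaschke a τ z)) * (1 - normSq (blaschke a τ (p k)))) :=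
              normSq_sub_le_g ha' hτ' hu1 hv1
          _ = normSq (z - p k) / ((1 - normSq z) * (1 - normSq (p k))) :=
              g_inv ha hτ hz1 hp1
      have humem : blaschke a τ z ∈ unitDisk := hu1
      have hvmem : blaschke a τ (p k) ∈ unitDisk := hv1
      have hm1u : m.1 (blaschke a τ z) ∈ unitDisk := by
        rw [hm'f]; exact blaschke_mem_disk ha' hτ' hu1
      have hm1v : m.1 (blaschke a τ (p k)) ∈ unitDisk := by
        rw [hm'f]; exact blaschke_mem_disk ha' hτ' hv1
      have l1 := hμL _ humem _ hvmem
      have l2 := hνL _ hm1u _ hm1v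
      have tri : |f z - f (p k)|
          ≤ |μ (blaschke a τ z) - μ (blaschke a τ (p k))|
            + |ν (m.1 (blaschke a τ z)) - ν (m.1 (blaschke a τ (p k)))| := by
        rw [hfdef]
        have t1 := abs_abs_sub_abs_le_abs_sub
          (μ (blaschke a τ z) - ν (m.1 (blaschke a τ z)))
          (μ (blaschke a τ (p k)) - ν (m.1 (blaschke a τ (p k))))
        have t2 : (μ (blaschke a τ z) - ν (m.1 (blaschke a τ z)))
            - (μ (blaschke a τ (p k)) - ν (m.1 (blaschke a τ (p k))))
            = (μ (blaschke a τ z) - μ (blaschke a τ (p k)))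
              - (ν (m.1 (blaschke a τ z)) - ν (m.1 (blaschke a τ (p k)))) := by ring
        rw [t2] at t1
        calc |f z - f (p k)|
            ≤ |(μ (blaschke a τ z) - μ (blaschke a τ (p k)))
              - (ν (m.1 (blaschke a τ z)) - ν (m.1 (blaschke a τ (p k))))| := t1
          _ ≤ _ := abs_sub _ _
      have c1 : ‖blaschke a τ z - blaschke a τ (p k)‖ ≤ ((1 - r) ^ 2)⁻¹ * h := by
        calc ‖blaschke a τ z - blaschke a τ (p k)‖
            ≤ ((1 - r) ^ 2)⁻¹ * ‖z - p k‖ := b1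
          _ ≤ ((1 - r) ^ 2)⁻¹ * h := by
              exact mul_le_mul_of_nonneg_left hzp hinv0
      have c2 : ‖m.1 (blaschke a τ z) - m.1 (blaschke a τ (p k))‖
          ≤ ((1 - r) ^ 2)⁻¹ * h := by
        calc ‖m.1 (blaschke a τ z) - m.1 (blaschke a τ (p k))‖
            ≤ ((1 - r) ^ 2)⁻¹ * ‖z - p k‖ := b2
          _ ≤ ((1 - r) ^ 2)⁻¹ * h := mul_le_mul_of_nonneg_left hzp hinv0
      have : |f z - f (p k)| ≤ Cμ * (((1 - r) ^ 2)⁻¹ * h) + Cν * (((1 - r) ^ 2)⁻¹ * h) := by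
        calc |f z - f (p k)| ≤ _ := tri
          _ ≤ Cμ * ‖blaschke a τ z - blaschke a τ (p k)‖
              + Cν * ‖m.1 (blaschke a τ z) - m.1 (blaschke a τ (p k))‖ := by
              exact add_le_add l1 l2
          _ ≤ Cμ * (((1 - r) ^ 2)⁻¹ * h) + Cν * (((1 - r) ^ 2)⁻¹ * h) := by
              exact add_le_add (mul_le_mul_of_nonneg_left c1 hCμ)
                (mul_le_mul_of_nonneg_left c2 hCν)
      calc |f z - f (p k)| ≤ Cμ * (((1 - r) ^ 2)⁻¹ * h) + Cν * (((1 - r) ^ 2)⁻¹ * h) := this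
        _ = ε := by rw [hεdef]; ring
    have hq := quad_approx Δ hΔmeas hΔdisj hΔcover p hp f ε hf
    constructor
    · rw [hcv]; exact hq.1
    · rw [hcv]; exact hq.2
  rw [← hE]
  constructor
  · calc dR R μ ν zi wj
        ≤ ⨅ m : {m : ℂ → ℂ // IsDiskMobius m ∧ m zi = wj},
          ((∑ k, volH (Δ k) * ENNReal.ofReal |μ (blaschke a τ (p k)) - ν (m.1 (blaschke a τ (p k)))|) + E) := by
          rw [dR]
          exact iInf_mono fun m => (key m).1
      _ = (⨅ m : {m : ℂ → ℂ // IsDiskMobius m ∧ m zi = wj},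
          ∑ k, volH (Δ k) * ENNReal.ofReal |μ (blaschke a τ (p k)) - ν (m.1 (blaschke a τ (p k)))|) + E :=
          ENNReal.iInf_add.symm
  · calc (⨅ m : {m : ℂ → ℂ // IsDiskMobius m ∧ m zi = wj},
          ∑ k, volH (Δ k) * ENNReal.ofReal |μ (blaschke a τ (p k)) - ν (m.1 (blaschke a τ (p k)))|)
        ≤ ⨅ m : {m : ℂ → ℂ // IsDiskMobius m ∧ m zi = wj},
          ((∫⁻ z in hypDisk zi R, ENNReal.ofReal |μ z - ν (m.1 z)| ∂volH) + E) :=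
          iInf_mono fun m => (key m).2
      _ = dR R μ ν zi wj + E := by rw [dR]; exact ENNReal.iInf_add.symm

end Main

end
end

section
/- Let m(z) = τ·(z − a)/(1 − conj(a)·z) be a disk Möbius transformation (a ∈ 𝔻, |τ| = 1), and let 0 < r < 1. Then for all z, w ∈ ℂ with |z| ≤ r and |w| ≤ r, |m(z) − m(w)| ≤ ((1 − |a|²)/(1 − r·|a|)²) · |z − w|; in particular, m restricted to the closed disk of radius r is Lipschitz with constant (1 − |a|²)/(1 − r·|a|)². -/
open Complex MeasureTheory ENNReal

noncomputable section

theorem mobius_lipschitz_on_ball (a τ : ℂ) (ha : ‖a‖ < 1)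
    (hτ : ‖τ‖ = 1) (r : ℝ) (hr0 : 0 < r) (hr1 : r < 1)
    (z w : ℂ) (hz : ‖z‖ ≤ r) (hw : ‖w‖ ≤ r) :
    ‖τ * (z - a) / (1 - (starRingEnd ℂ) a * z)
        - τ * (w - a) / (1 - (starRingEnd ℂ) a * w)‖
      ≤ (1 - ‖a‖ ^ 2) / (1 - r * ‖a‖) ^ 2 * ‖z - w‖ := by
  have hra : r * ‖a‖ < 1 := by
    nlinarith [norm_nonneg a]
  have hzden : ‖(starRingEnd ℂ) a * z‖ < 1 := by
    rw [norm_mul, Complex.norm_conj]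
    nlinarith [norm_nonneg a, norm_nonneg z]
  have hwden : ‖(starRingEnd ℂ) a * w‖ < 1 := by
    rw [norm_mul, Complex.norm_conj]
    nlinarith [norm_nonneg a, norm_nonneg w]
  have hz0 : (1 : ℂ) - (starRingEnd ℂ) a * z ≠ 0 := by
    intro h
    have : (starRingEnd ℂ) a * z = 1 := by linear_combination -h
    rw [this] at hzden; simp at hzden
  have hw0 : (1 : ℂ) - (starRingEnd ℂ) a * w ≠ 0 := by
    intro h
    have : (starRingEnd ℂ) a * w = 1 := by linear_combination -h
    rw [this] at hwden; simp at hwden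
  have key : τ * (z - a) / (1 - (starRingEnd ℂ) a * z)
        - τ * (w - a) / (1 - (starRingEnd ℂ) a * w)
      = τ * (1 - a * (starRingEnd ℂ) a) * (z - w)
        / ((1 - (starRingEnd ℂ) a * z) * (1 - (starRingEnd ℂ) a * w)) := by
    rw [div_sub_div _ _ hz0 hw0]
    ring
  rw [key, norm_div, norm_mul, norm_mul, norm_mul, hτ, one_mul]
  have haa : ‖1 - a * (starRingEnd ℂ) a‖ = 1 - ‖a‖ ^ 2 := by
    rw [Complex.mul_conj, Complex.normSq_eq_norm_sq, ← Complex.ofReal_one, ← Complex.ofReal_sub,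
      Complex.norm_real, Real.norm_eq_abs]
    exact abs_of_nonneg (by nlinarith [norm_nonneg a])
  rw [haa]
  have hlbz : 1 - r * ‖a‖ ≤ ‖1 - (starRingEnd ℂ) a * z‖ := by
    have := norm_sub_norm_le (1 : ℂ) ((starRingEnd ℂ) a * z)
    simp only [norm_one, norm_mul, Complex.norm_conj] at this
    nlinarith [norm_nonneg a]
  have hlbw : 1 - r * ‖a‖ ≤ ‖1 - (starRingEnd ℂ) a * w‖ := by
    have := norm_sub_norm_le (1 : ℂ) ((starRingEnd ℂ) a * w)
    simp only [norm_one, norm_mul, Complex.norm_conj] at this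
    nlinarith [norm_nonneg a]
  have hpos : 0 < 1 - r * ‖a‖ := by linarith
  have habsz : 0 < ‖1 - (starRingEnd ℂ) a * z‖ := norm_pos_iff.mpr hz0
  have habsw : 0 < ‖1 - (starRingEnd ℂ) a * w‖ := norm_pos_iff.mpr hw0
  rw [div_le_iff₀ (by positivity)]
  have hnum : 0 ≤ 1 - ‖a‖ ^ 2 := by nlinarith [norm_nonneg a]
  calc (1 - ‖a‖ ^ 2) * ‖z - w‖
      = (1 - ‖a‖ ^ 2) / (1 - r * ‖a‖) ^ 2 * ‖z - w‖
        * ((1 - r * ‖a‖) * (1 - r * ‖a‖)) := by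
        rw [← sq (1 - r * ‖a‖), div_mul_eq_mul_div, div_mul_eq_mul_div]
        exact (mul_div_cancel_right₀ _ (by positivity)).symm
    _ ≤ (1 - ‖a‖ ^ 2) / (1 - r * ‖a‖) ^ 2 * ‖z - w‖
        * (‖1 - (starRingEnd ℂ) a * z‖ * ‖1 - (starRingEnd ℂ) a * w‖) := by
        apply mul_le_mul_of_nonneg_left _ (by positivity)
        exact mul_le_mul hlbz hlbw (le_of_lt hpos) (norm_nonneg _)

end
end

section
/- Let N and M be natural numbers with 0 < M < N, and let P ⊆ Matrix (Fin N) (Fin N) ℝ be the set of matrices π satisfying: π i j ≥ 0 for all i, j; Σ_i π i j ≤ 1 for every column j; Σ_j π i j ≤ 1 for every row i; and Σ_{i,j} π i j = M. Then P is convex, and a matrix π is an extreme point of P if and only if π ∈ P and every entry of π is equal to 0 or to 1. -/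
open Finset

/-- The polytope of sub-doubly-stochastic `N × N` matrices with total mass `M`. -/
def transportPolytope (N M : ℕ) : Set (Matrix (Fin N) (Fin N) ℝ) :=
  {π | (∀ i j, 0 ≤ π i j) ∧ (∀ j, ∑ i, π i j ≤ 1) ∧ (∀ i, ∑ j, π i j ≤ 1) ∧
    ∑ i, ∑ j, π i j = (M : ℝ)}

lemma tp_convex (N M : ℕ) : Convex ℝ (transportPolytope N M) := by
  rintro x ⟨hx0, hxc, hxr, hxt⟩ y ⟨hy0, hyc, hyr, hyt⟩ a b ha hb hab
  have key : ∀ i j, (a • x + b • y) i j = a * x i j + b * y i j := by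
    intro i j
    simp [Matrix.add_apply, Matrix.smul_apply, smul_eq_mul]
  refine ⟨?_, ?_, ?_, ?_⟩
  · intro i j
    rw [key]
    exact add_nonneg (mul_nonneg ha (hx0 i j)) (mul_nonneg hb (hy0 i j))
  · intro j
    calc ∑ i, (a • x + b • y) i j = a * ∑ i, x i j + b * ∑ i, y i j := by
          simp only [key]
          rw [Finset.sum_add_distrib, Finset.mul_sum, Finset.mul_sum]
      _ ≤ a * 1 + b * 1 :=
          add_le_add (mul_le_mul_of_nonneg_left (hxc j) ha)
            (mul_le_mul_of_nonneg_left (hyc j) hb)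
      _ = 1 := by linarith
  · intro i
    calc ∑ j, (a • x + b • y) i j = a * ∑ j, x i j + b * ∑ j, y i j := by
          simp only [key]
          rw [Finset.sum_add_distrib, Finset.mul_sum, Finset.mul_sum]
      _ ≤ a * 1 + b * 1 :=
          add_le_add (mul_le_mul_of_nonneg_left (hxr i) ha)
            (mul_le_mul_of_nonneg_left (hyr i) hb)
      _ = 1 := by linarith
  · calc ∑ i, ∑ j, (a • x + b • y) i j
        = a * (∑ i, ∑ j, x i j) + b * (∑ i, ∑ j, y i j) := by
          simp only [key, Finset.sum_add_distrib, Finset.mul_sum]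
      _ = (M : ℝ) := by rw [hxt, hyt, ← add_mul, hab, one_mul]

lemma tp_entry_le_one {N M : ℕ} {x : Matrix (Fin N) (Fin N) ℝ}
    (hx : x ∈ transportPolytope N M) (i j : Fin N) : x i j ≤ 1 := by
  obtain ⟨h0, _, hr, _⟩ := hx
  calc x i j ≤ ∑ j', x i j' := Finset.single_le_sum (fun j' _ => h0 i j') (mem_univ j)
    _ ≤ 1 := hr i

lemma tp_integral_extreme {N M : ℕ} {π : Matrix (Fin N) (Fin N) ℝ}
    (hπ : π ∈ transportPolytope N M) (hint : ∀ i j, π i j = 0 ∨ π i j = 1) :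
    π ∈ (transportPolytope N M).extremePoints ℝ := by
  refine ⟨hπ, ?_⟩
  rintro y hy z hz ⟨a, b, ha, hb, hab, habπ⟩
  have hkey : ∀ i j, y i j = π i j ∧ z i j = π i j := by
    intro i j
    have he : a * y i j + b * z i j = π i j := by
      rw [← habπ]
      simp [Matrix.add_apply, Matrix.smul_apply, smul_eq_mul]
    have hy0 := hy.1 i j
    have hz0 := hz.1 i j
    have hy1 := tp_entry_le_one hy i j
    have hz1 := tp_entry_le_one hz i j
    rcases hint i j with h | h <;> rw [h] at he ⊢
    · constructor <;> nlinarith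
    · constructor <;> nlinarith
  exact funext fun i => funext fun j => (hkey i j).1

lemma pm01 {n : Type*} [Fintype n] [DecidableEq n] (σ : Equiv.Perm n) (a b : n) :
    (σ.permMatrix ℝ) a b = 0 ∨ (σ.permMatrix ℝ) a b = 1 := by
  simp only [Equiv.Perm.permMatrix, PEquiv.toMatrix_apply]
  split <;> simp

lemma pm_nonneg {n : Type*} [Fintype n] [DecidableEq n] (σ : Equiv.Perm n) (a b : n) :
    0 ≤ (σ.permMatrix ℝ) a b := by
  rcases pm01 σ a b with h | h <;> rw [h] <;> norm_num

lemma tp_subset_hull (N M : ℕ) (hM : 0 < M) (hMN : M < N) :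
    transportPolytope N M ⊆
      convexHull ℝ {x | x ∈ transportPolytope N M ∧ ∀ i j, x i j = 0 ∨ x i j = 1} := by
  set K := N - M with hKdef
  have hK0 : 0 < K := Nat.sub_pos_of_lt hMN
  have hKR : (K : ℝ) = (N : ℝ) - (M : ℝ) := by
    rw [hKdef, Nat.cast_sub hMN.le]
  have hKpos : (0:ℝ) < K := by exact_mod_cast hK0
  have hKne : (K : ℝ) ≠ 0 := hKpos.ne'
  intro π hπ
  obtain ⟨h0, hc, hr, ht⟩ := hπ
  have htot' : ∑ j, ∑ i, π i j = (M : ℝ) := by rw [Finset.sum_comm]; exact ht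
  -- the big doubly stochastic matrix
  set B : Matrix (Fin N ⊕ Fin K) (Fin N ⊕ Fin K) ℝ :=
    fun a b => match a, b with
      | Sum.inl i, Sum.inl j => π i j
      | Sum.inl i, Sum.inr _ => (1 - ∑ j, π i j) / K
      | Sum.inr _, Sum.inl j => (1 - ∑ i, π i j) / K
      | Sum.inr _, Sum.inr _ => 0
    with hBdef
  have hBds : B ∈ doublyStochastic ℝ (Fin N ⊕ Fin K) := by
    rw [mem_doublyStochastic_iff_sum]
    refine ⟨?_, ?_, ?_⟩
    · rintro (i | k) (j | l)
      · exact h0 i j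
      · have h1 : (0:ℝ) ≤ 1 - ∑ j, π i j := by linarith [hr i]
        exact div_nonneg h1 hKpos.le
      · have h1 : (0:ℝ) ≤ 1 - ∑ i, π i j := by linarith [hc j]
        exact div_nonneg h1 hKpos.le
      · exact le_refl 0
    · rintro (i | k)
      · show (∑ b, B (Sum.inl i) b) = 1
        rw [Fintype.sum_sum_type]
        show (∑ j, π i j) + (∑ _k : Fin K, (1 - ∑ j, π i j) / K) = 1
        rw [Finset.sum_const, Finset.card_univ, Fintype.card_fin, nsmul_eq_mul]
        field_simp
        ring
      · show (∑ b, B (Sum.inr k) b) = 1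
        rw [Fintype.sum_sum_type]
        show (∑ j, (1 - ∑ i, π i j) / K) + (∑ _l : Fin K, (0:ℝ)) = 1
        rw [Finset.sum_const, smul_zero, add_zero, ← Finset.sum_div,
          Finset.sum_sub_distrib, Finset.sum_const, Finset.card_univ, Fintype.card_fin,
          nsmul_eq_mul, mul_one, htot', ← hKR, div_self hKne]
    · rintro (j | l)
      · show (∑ a, B a (Sum.inl j)) = 1
        rw [Fintype.sum_sum_type]
        show (∑ i, π i j) + (∑ _k : Fin K, (1 - ∑ i, π i j) / K) = 1
        rw [Finset.sum_const, Finset.card_univ, Fintype.card_fin, nsmul_eq_mul]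
        field_simp
        ring
      · show (∑ a, B a (Sum.inr l)) = 1
        rw [Fintype.sum_sum_type]
        show (∑ i, (1 - ∑ j, π i j) / K) + (∑ _k : Fin K, (0:ℝ)) = 1
        rw [Finset.sum_const, smul_zero, add_zero, ← Finset.sum_div,
          Finset.sum_sub_distrib, Finset.sum_const, Finset.card_univ, Fintype.card_fin,
          nsmul_eq_mul, mul_one, ht, ← hKR, div_self hKne]
  obtain ⟨w, hw0, hw1, hw3⟩ := exists_eq_sum_perm_of_mem_doublyStochastic hBds
  have hentry : ∀ a b, ∑ σ, w σ * (σ.permMatrix ℝ) a b = B a b := by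
    intro a b
    have h := congrFun (congrFun hw3 a) b
    simpa [Matrix.sum_apply, smul_eq_mul] using h
  have hsupp : ∀ σ, w σ ≠ 0 → ∀ k l, (σ.permMatrix ℝ) (Sum.inr k) (Sum.inr l) = 0 := by
    intro σ hσ k l
    have hz : ∑ σ' : Equiv.Perm (Fin N ⊕ Fin K),
        w σ' * (σ'.permMatrix ℝ) (Sum.inr k) (Sum.inr l) = 0 := by
      rw [hentry]
    have := (Finset.sum_eq_zero_iff_of_nonneg
      (fun σ' _ => mul_nonneg (hw0 σ') (pm_nonneg σ' _ _))).1 hz σ (mem_univ σ)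
    rcases mul_eq_zero.1 this with h | h
    · exact absurd h hσ
    · exact h
  -- the restricted 0/1 matrices
  set Q : Equiv.Perm (Fin N ⊕ Fin K) → Matrix (Fin N) (Fin N) ℝ :=
    fun σ i j => (σ.permMatrix ℝ) (Sum.inl i) (Sum.inl j) with hQdef
  have hQmem : ∀ σ, w σ ≠ 0 →
      Q σ ∈ {x | x ∈ transportPolytope N M ∧ ∀ i j, x i j = 0 ∨ x i j = 1} := by
    intro σ hσ
    have hds := (permMatrix_mem_doublyStochastic (σ := σ) (R := ℝ))
    have hrow : ∀ a, ∑ b, (σ.permMatrix ℝ) a b = 1 :=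
      fun a => sum_row_of_mem_doublyStochastic hds a
    have hcol : ∀ b, ∑ a, (σ.permMatrix ℝ) a b = 1 :=
      fun b => sum_col_of_mem_doublyStochastic hds b
    have hbot : ∀ k, ∑ j, (σ.permMatrix ℝ) (Sum.inr k) (Sum.inl j) = 1 := by
      intro k
      have h := hrow (Sum.inr k)
      rw [Fintype.sum_sum_type] at h
      have h2 : ∑ l : Fin K, (σ.permMatrix ℝ) (Sum.inr k) (Sum.inr l) = 0 :=
        Finset.sum_eq_zero fun l _ => hsupp σ hσ k l
      linarith [h, h2]
    refine ⟨⟨?_, ?_, ?_, ?_⟩, ?_⟩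
    · intro i j; exact pm_nonneg σ _ _
    · intro j
      have h := hcol (Sum.inl j)
      rw [Fintype.sum_sum_type] at h
      have h2 : 0 ≤ ∑ k : Fin K, (σ.permMatrix ℝ) (Sum.inr k) (Sum.inl j) :=
        Finset.sum_nonneg fun k _ => pm_nonneg σ _ _
      show ∑ i, (σ.permMatrix ℝ) (Sum.inl i) (Sum.inl j) ≤ 1
      linarith
    · intro i
      have h := hrow (Sum.inl i)
      rw [Fintype.sum_sum_type] at h
      have h2 : 0 ≤ ∑ l : Fin K, (σ.permMatrix ℝ) (Sum.inl i) (Sum.inr l) :=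
        Finset.sum_nonneg fun l _ => pm_nonneg σ _ _
      show ∑ j, (σ.permMatrix ℝ) (Sum.inl i) (Sum.inl j) ≤ 1
      linarith
    · show ∑ i, ∑ j, (σ.permMatrix ℝ) (Sum.inl i) (Sum.inl j) = (M:ℝ)
      rw [Finset.sum_comm]
      have hsplit : ∀ j : Fin N, ∑ i, (σ.permMatrix ℝ) (Sum.inl i) (Sum.inl j)
          = 1 - ∑ k : Fin K, (σ.permMatrix ℝ) (Sum.inr k) (Sum.inl j) := by
        intro j
        have h := hcol (Sum.inl j)
        rw [Fintype.sum_sum_type] at h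
        linarith
      rw [Finset.sum_congr rfl fun j _ => hsplit j, Finset.sum_sub_distrib,
        Finset.sum_const, Finset.card_univ, Fintype.card_fin, nsmul_eq_mul, mul_one,
        Finset.sum_comm, Finset.sum_congr rfl fun k _ => hbot k, Finset.sum_const,
        Finset.card_univ, Fintype.card_fin, nsmul_eq_mul, mul_one, hKR]
      ring
    · intro i j; exact pm01 σ _ _
  -- π is the center of mass of the Q σ with positive weight
  have hsum : ∑ σ, w σ • Q σ = π := by
    funext i j
    have h := hentry (Sum.inl i) (Sum.inl j)
    simp only [Matrix.sum_apply, Matrix.smul_apply, smul_eq_mul]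
    exact h
  set t : Finset (Equiv.Perm (Fin N ⊕ Fin K)) := univ.filter (fun σ => w σ ≠ 0) with htdef
  have hts : ∑ σ ∈ t, w σ = 1 := by
    rw [htdef, Finset.sum_filter_ne_zero, hw1]
  have hcm : t.centerMass w Q = π := by
    rw [Finset.centerMass_eq_of_sum_1 _ _ hts, ← hsum]
    apply Finset.sum_subset (Finset.filter_subset _ _)
    intro σ _ hσ
    have hw : w σ = 0 := by
      by_contra h
      exact hσ (Finset.mem_filter.2 ⟨mem_univ σ, h⟩)
    rw [hw, zero_smul]
  rw [← hcm]
  apply Finset.centerMass_mem_convexHull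
  · intro σ _; exact hw0 σ
  · rw [hts]; norm_num
  · intro σ hσ
    rw [htdef, Finset.mem_filter] at hσ
    exact hQmem σ hσ.2

theorem extreme_points_of_transport_polytope (N M : ℕ) (hM : 0 < M) (hMN : M < N) :
    Convex ℝ (transportPolytope N M) ∧
    ∀ π : Matrix (Fin N) (Fin N) ℝ,
      π ∈ (transportPolytope N M).extremePoints ℝ ↔
        (π ∈ transportPolytope N M ∧ ∀ i j, π i j = 0 ∨ π i j = 1) := by
  refine ⟨tp_convex N M, fun π => ⟨fun hext => ?_, fun ⟨h1, h2⟩ => tp_integral_extreme h1 h2⟩⟩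
  have heq : transportPolytope N M =
      convexHull ℝ {x | x ∈ transportPolytope N M ∧ ∀ i j, x i j = 0 ∨ x i j = 1} :=
    le_antisymm (tp_subset_hull N M hM hMN)
      (convexHull_min (fun x hx => hx.1) (tp_convex N M))
  rw [heq] at hext
  have hmem : π ∈ {x | x ∈ transportPolytope N M ∧ ∀ i j, x i j = 0 ∨ x i j = 1} :=
    extremePoints_convexHull_subset hext
  exact hmem
end
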